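/- arXiv:2107.11939 — 8 statements merged into one kernel-verified Lean document; each statement's English description precedes it below -/
import Mathlib

section
/- Let W : ℕ → (Δ → ℝ) be the finite-horizon value functions defined by W₀ ≡ 0 and W_{n+1}(ω) = max( ω·B + β Σ_{k<K} ω_k W_n(p_k), m + β W_n(ωP) ). Then for every n ∈ ℕ and all ω₁, ω₂ ∈ Δ, |W_n(ω₁) − W_n(ω₂)| ≤ B_max · (1 − β^n)/(1 − β) · Σ_i |ω₁,ᵢ − ω₂,ᵢ|, where B_max = max_i B_i. -/
open Matrix

/-- Centering trick: if `∑ d = 0` and the values of `f` pairwise differ by at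
most `M`, then `|∑ d k * f k| ≤ M/2 * ∑ |d k|`. -/
private lemma center_bound {K : ℕ} (hK : 1 ≤ K) (d f : Fin K → ℝ)
    (hd : ∑ k, d k = 0) (M : ℝ) (hM : ∀ j l, |f j - f l| ≤ M) :
    |∑ k, d k * f k| ≤ M / 2 * ∑ k, |d k| := by
  have hne : (Finset.univ : Finset (Fin K)).Nonempty := ⟨⟨0, hK⟩, Finset.mem_univ _⟩
  set c : ℝ := (Finset.univ.sup' hne f + Finset.univ.inf' hne f) / 2 with hc
  have key : ∀ k, |f k - c| ≤ M / 2 := by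
    intro k
    obtain ⟨j, _, hj⟩ := Finset.exists_mem_eq_sup' hne f
    obtain ⟨l, _, hl⟩ := Finset.exists_mem_eq_inf' hne f
    have h1 : Finset.univ.inf' hne f ≤ f k := Finset.inf'_le _ (Finset.mem_univ k)
    have h2 : f k ≤ Finset.univ.sup' hne f := Finset.le_sup' _ (Finset.mem_univ k)
    have h3 : Finset.univ.sup' hne f - Finset.univ.inf' hne f ≤ M := by
      rw [hj, hl]
      exact le_trans (le_abs_self _) (hM j l)
    rw [abs_le]; constructor <;> [skip; skip] <;>
      simp only [hc] <;> linarith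
  have hrw : ∑ k, d k * (f k - c) = ∑ k, d k * f k := by
    simp only [mul_sub, Finset.sum_sub_distrib, ← Finset.sum_mul, hd, zero_mul, sub_zero]
  calc |∑ k, d k * f k| = |∑ k, d k * (f k - c)| := by rw [hrw]
    _ ≤ ∑ k, |d k * (f k - c)| := Finset.abs_sum_le_sum_abs _ _
    _ ≤ ∑ k, |d k| * (M / 2) := by
        refine Finset.sum_le_sum fun k _ => ?_
        rw [abs_mul]
        exact mul_le_mul_of_nonneg_left (key k) (abs_nonneg _)
    _ = M / 2 * ∑ k, |d k| := by rw [← Finset.sum_mul]; ring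

/-- The finite-horizon value functions are Lipschitz in the belief state with
constant `B_max · (1 − β^n)/(1 − β)` with respect to the ℓ¹-distance. -/
theorem finite_horizon_lipschitz (K : ℕ) (hK : 1 ≤ K)
    (P : Matrix (Fin K) (Fin K) ℝ)
    (hPnn : ∀ i j, 0 ≤ P i j) (hProw : ∀ i, ∑ j, P i j = 1)
    (B : Fin K → ℝ) (hB : ∀ i, 0 ≤ B i)
    (β : ℝ) (hβ₀ : 0 < β) (hβ₁ : β < 1) (m : ℝ)
    (W : ℕ → (Fin K → ℝ) → ℝ)
    (hW0 : ∀ ω ∈ stdSimplex ℝ (Fin K), W 0 ω = 0)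
    (hWrec : ∀ n, ∀ ω ∈ stdSimplex ℝ (Fin K),
      W (n + 1) ω = max (ω ⬝ᵥ B + β * ∑ k, ω k * W n (P k)) (m + β * W n (ω ᵥ* P)))
    (Bmax : ℝ) (hBmax : IsGreatest (Set.range B) Bmax) :
    ∀ n : ℕ, ∀ ω₁ ∈ stdSimplex ℝ (Fin K), ∀ ω₂ ∈ stdSimplex ℝ (Fin K),
      |W n ω₁ - W n ω₂| ≤ Bmax * ((1 - β ^ n) / (1 - β)) * ∑ i, |ω₁ i - ω₂ i| := by
  have i0 : Fin K := ⟨0, hK⟩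
  have hBmax0 : 0 ≤ Bmax := by
    obtain ⟨i, hi⟩ := hBmax.1
    exact hi ▸ hB i
  have hBle : ∀ i, B i ≤ Bmax := fun i => hBmax.2 ⟨i, rfl⟩
  have h1β : 0 < 1 - β := by linarith
  have hLnn : ∀ n : ℕ, 0 ≤ Bmax * ((1 - β ^ n) / (1 - β)) := by
    intro n
    have hβn : β ^ n ≤ 1 := pow_le_one₀ hβ₀.le hβ₁.le
    have h1β : (0:ℝ) < 1 - β := by linarith
    exact mul_nonneg hBmax0 (div_nonneg (by linarith) h1β.le)
  have hrow : ∀ k, P k ∈ stdSimplex ℝ (Fin K) := fun k => ⟨fun j => hPnn k j, hProw k⟩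
  have hvm : ∀ ω ∈ stdSimplex ℝ (Fin K), ω ᵥ* P ∈ stdSimplex ℝ (Fin K) := by
    intro ω hω
    obtain ⟨hω1, hω2⟩ := hω
    constructor
    · intro j
      simp only [vecMul, dotProduct]
      exact Finset.sum_nonneg fun i _ => mul_nonneg (hω1 i) (hPnn i j)
    · simp only [vecMul, dotProduct]
      rw [Finset.sum_comm]
      simp only [← Finset.mul_sum, hProw, mul_one, hω2]
  -- ℓ¹ diameter of the simplex is at most 2
  have hdiam : ∀ x ∈ stdSimplex ℝ (Fin K), ∀ y ∈ stdSimplex ℝ (Fin K),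
      ∑ i, |x i - y i| ≤ 2 := by
    intro x hx y hy
    calc ∑ i, |x i - y i| ≤ ∑ i, (x i + y i) := by
          refine Finset.sum_le_sum fun i _ => ?_
          have := abs_sub (x i) (y i)
          rw [abs_of_nonneg (hx.1 i), abs_of_nonneg (hy.1 i)] at this
          exact this
      _ = 2 := by rw [Finset.sum_add_distrib, hx.2, hy.2]; norm_num
  intro n
  induction n with
  | zero =>
    intro ω₁ h₁ ω₂ h₂
    rw [hW0 ω₁ h₁, hW0 ω₂ h₂]
    simp
  | succ n ih =>
    intro ω₁ h₁ ω₂ h₂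
    set L := Bmax * ((1 - β ^ n) / (1 - β)) with hLdef
    have hL0 : 0 ≤ L := hLnn n
    have hS0 : 0 ≤ ∑ i, |ω₁ i - ω₂ i| := Finset.sum_nonneg fun i _ => abs_nonneg _
    have hLsucc : Bmax * ((1 - β ^ (n + 1)) / (1 - β)) = Bmax + β * L := by
      rw [hLdef]
      field_simp
      ring
    rw [hWrec n ω₁ h₁, hWrec n ω₂ h₂, hLsucc]
    refine le_trans (abs_max_sub_max_le_max _ _ _ _) (max_le ?_ ?_)
    · -- active arm branch
      have hd : ∑ k, (ω₁ k - ω₂ k) = 0 := by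
        rw [Finset.sum_sub_distrib, h₁.2, h₂.2, sub_self]
      have hMW : ∀ j l, |W n (P j) - W n (P l)| ≤ 2 * L := by
        intro j l
        calc |W n (P j) - W n (P l)| ≤ L * ∑ i, |P j i - P l i| :=
              ih (P j) (hrow j) (P l) (hrow l)
          _ ≤ L * 2 := mul_le_mul_of_nonneg_left (hdiam _ (hrow j) _ (hrow l)) hL0
          _ = 2 * L := by ring
      have hWterm : |∑ k, (ω₁ k - ω₂ k) * W n (P k)| ≤ L * ∑ i, |ω₁ i - ω₂ i| := by
        have := center_bound hK (fun k => ω₁ k - ω₂ k) (fun k => W n (P k)) hd (2 * L) hMW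
        simpa using this.trans_eq (by ring)
      have hBterm : |∑ i, (ω₁ i - ω₂ i) * B i| ≤ Bmax * ∑ i, |ω₁ i - ω₂ i| := by
        calc |∑ i, (ω₁ i - ω₂ i) * B i| ≤ ∑ i, |(ω₁ i - ω₂ i) * B i| :=
              Finset.abs_sum_le_sum_abs _ _
          _ ≤ ∑ i, |ω₁ i - ω₂ i| * Bmax := by
              refine Finset.sum_le_sum fun i _ => ?_
              rw [abs_mul, abs_of_nonneg (hB i)]
              exact mul_le_mul_of_nonneg_left (hBle i) (abs_nonneg _)
          _ = Bmax * ∑ i, |ω₁ i - ω₂ i| := by rw [← Finset.sum_mul]; ring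
      have hrw : ω₁ ⬝ᵥ B + β * ∑ k, ω₁ k * W n (P k) -
          (ω₂ ⬝ᵥ B + β * ∑ k, ω₂ k * W n (P k)) =
          (∑ i, (ω₁ i - ω₂ i) * B i) + β * ∑ k, (ω₁ k - ω₂ k) * W n (P k) := by
        simp only [dotProduct, sub_mul, Finset.sum_sub_distrib, mul_sub]
        ring
      rw [hrw]
      calc |(∑ i, (ω₁ i - ω₂ i) * B i) + β * ∑ k, (ω₁ k - ω₂ k) * W n (P k)|
          ≤ |∑ i, (ω₁ i - ω₂ i) * B i| + |β * ∑ k, (ω₁ k - ω₂ k) * W n (P k)| :=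
            abs_add_le _ _
        _ ≤ Bmax * ∑ i, |ω₁ i - ω₂ i| + β * (L * ∑ i, |ω₁ i - ω₂ i|) := by
            refine add_le_add hBterm ?_
            rw [abs_mul, abs_of_pos hβ₀]
            exact mul_le_mul_of_nonneg_left hWterm hβ₀.le
        _ = (Bmax + β * L) * ∑ i, |ω₁ i - ω₂ i| := by ring
    · -- passive branch
      have hcontr : ∑ j, |(ω₁ ᵥ* P) j - (ω₂ ᵥ* P) j| ≤ ∑ i, |ω₁ i - ω₂ i| := by
        calc ∑ j, |(ω₁ ᵥ* P) j - (ω₂ ᵥ* P) j|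
            = ∑ j, |∑ i, (ω₁ i - ω₂ i) * P i j| := by
              refine Finset.sum_congr rfl fun j _ => ?_
              simp only [vecMul, dotProduct, sub_mul, Finset.sum_sub_distrib]
          _ ≤ ∑ j, ∑ i, |ω₁ i - ω₂ i| * P i j := by
              refine Finset.sum_le_sum fun j _ => ?_
              refine le_trans (Finset.abs_sum_le_sum_abs _ _) ?_
              refine Finset.sum_le_sum fun i _ => ?_
              rw [abs_mul, abs_of_nonneg (hPnn i j)]
          _ = ∑ i, |ω₁ i - ω₂ i| := by
              rw [Finset.sum_comm]
              simp only [← Finset.mul_sum, hProw, mul_one]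
      have hrw : m + β * W n (ω₁ ᵥ* P) - (m + β * W n (ω₂ ᵥ* P)) =
          β * (W n (ω₁ ᵥ* P) - W n (ω₂ ᵥ* P)) := by ring
      rw [hrw, abs_mul, abs_of_pos hβ₀]
      calc β * |W n (ω₁ ᵥ* P) - W n (ω₂ ᵥ* P)|
          ≤ β * (L * ∑ j, |(ω₁ ᵥ* P) j - (ω₂ ᵥ* P) j|) :=
            mul_le_mul_of_nonneg_left (ih _ (hvm ω₁ h₁) _ (hvm ω₂ h₂)) hβ₀.le
        _ ≤ β * (L * ∑ i, |ω₁ i - ω₂ i|) := by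
            refine mul_le_mul_of_nonneg_left (mul_le_mul_of_nonneg_left hcontr hL0) hβ₀.le
        _ ≤ (Bmax + β * L) * ∑ i, |ω₁ i - ω₂ i| := by nlinarith
end

section
/- Let V be a bounded function on Δ satisfying the Bellman equation for subsidy m. Then V is convex on Δ: for all ω₁, ω₂ ∈ Δ and all t ∈ [0,1], V(t ω₁ + (1−t) ω₂) ≤ t V(ω₁) + (1−t) V(ω₂). -/
open Matrix

lemma vecMul_mem_stdSimplex {K : ℕ} {P : Matrix (Fin K) (Fin K) ℝ}
    (hPnn : ∀ i j, 0 ≤ P i j) (hProw : ∀ i, ∑ j, P i j = 1)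
    {ω : Fin K → ℝ} (hω : ω ∈ stdSimplex ℝ (Fin K)) :
    ω ᵥ* P ∈ stdSimplex ℝ (Fin K) := by
  constructor
  · intro j
    simp only [Matrix.vecMul, dotProduct]
    exact Finset.sum_nonneg fun i _ => mul_nonneg (hω.1 i) (hPnn i j)
  · simp only [Matrix.vecMul, dotProduct]
    rw [Finset.sum_comm]
    calc ∑ i, ∑ j, ω i * P i j = ∑ i, ω i * ∑ j, P i j := by
          simp [Finset.mul_sum]
      _ = 1 := by simp [hProw, hω.2]

/-- A bounded solution of the Bellman equation is convex on the simplex. -/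
theorem bellman_value_convex (K : ℕ) (hK : 1 ≤ K)
    (P : Matrix (Fin K) (Fin K) ℝ)
    (hPnn : ∀ i j, 0 ≤ P i j) (hProw : ∀ i, ∑ j, P i j = 1)
    (B : Fin K → ℝ) (hB : ∀ i, 0 ≤ B i)
    (β : ℝ) (hβ₀ : 0 < β) (hβ₁ : β < 1) (m : ℝ)
    (V : (Fin K → ℝ) → ℝ)
    (hbd : ∃ C, ∀ ω ∈ stdSimplex ℝ (Fin K), |V ω| ≤ C)
    (hBell : ∀ ω ∈ stdSimplex ℝ (Fin K),
      V ω = max (ω ⬝ᵥ B + β * ∑ k, ω k * V (P k)) (m + β * V (ω ᵥ* P))) :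
    ∀ ω₁ ∈ stdSimplex ℝ (Fin K), ∀ ω₂ ∈ stdSimplex ℝ (Fin K),
      ∀ t : ℝ, 0 ≤ t → t ≤ 1 →
        V (t • ω₁ + (1 - t) • ω₂) ≤ t * V ω₁ + (1 - t) * V ω₂ := by
  obtain ⟨C, hC⟩ := hbd
  have hconv := convex_stdSimplex ℝ (Fin K)
  have key : ∀ n : ℕ, ∀ ω₁ ∈ stdSimplex ℝ (Fin K), ∀ ω₂ ∈ stdSimplex ℝ (Fin K),
      ∀ t : ℝ, 0 ≤ t → t ≤ 1 →
      V (t • ω₁ + (1 - t) • ω₂) ≤ t * V ω₁ + (1 - t) * V ω₂ + β ^ n * (2 * C) := by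
    intro n
    induction n with
    | zero =>
      intro ω₁ h1 ω₂ h2 t ht0 ht1
      have hmem : t • ω₁ + (1 - t) • ω₂ ∈ stdSimplex ℝ (Fin K) :=
        hconv h1 h2 ht0 (by linarith) (by ring)
      have a1 := abs_le.mp (hC _ h1)
      have a2 := abs_le.mp (hC _ h2)
      have a3 := abs_le.mp (hC _ hmem)
      nlinarith [a1.1, a1.2, a2.1, a2.2, a3.1, a3.2]
    | succ n ih =>
      intro ω₁ h1 ω₂ h2 t ht0 ht1
      have hmem : t • ω₁ + (1 - t) • ω₂ ∈ stdSimplex ℝ (Fin K) :=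
        hconv h1 h2 ht0 (by linarith) (by ring)
      have hC0 : 0 ≤ C := le_trans (abs_nonneg _) (hC _ h1)
      have hβn : (0:ℝ) ≤ β ^ (n+1) * (2*C) := by positivity
      rw [hBell _ hmem]
      apply max_le
      · -- affine branch
        have hf1 : ω₁ ⬝ᵥ B + β * ∑ k, ω₁ k * V (P k) ≤ V ω₁ := by
          rw [hBell _ h1]; exact le_max_left _ _
        have hf2 : ω₂ ⬝ᵥ B + β * ∑ k, ω₂ k * V (P k) ≤ V ω₂ := by
          rw [hBell _ h2]; exact le_max_left _ _
        have hexp : (t • ω₁ + (1 - t) • ω₂) ⬝ᵥ B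
              + β * ∑ k, (t • ω₁ + (1 - t) • ω₂) k * V (P k)
            = t * (ω₁ ⬝ᵥ B + β * ∑ k, ω₁ k * V (P k))
              + (1-t) * (ω₂ ⬝ᵥ B + β * ∑ k, ω₂ k * V (P k)) := by
          simp only [dotProduct, Pi.add_apply, Pi.smul_apply, smul_eq_mul, add_mul]
          rw [Finset.sum_add_distrib, Finset.sum_add_distrib]
          simp only [mul_assoc, ← Finset.mul_sum]
          ring
        rw [hexp]
        have := mul_le_mul_of_nonneg_left hf1 ht0
        have := mul_le_mul_of_nonneg_left hf2 (by linarith : (0:ℝ) ≤ 1 - t)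
        linarith
      · -- continuation branch
        have hm1 := vecMul_mem_stdSimplex hPnn hProw h1
        have hm2 := vecMul_mem_stdSimplex hPnn hProw h2
        have hmul : (t • ω₁ + (1 - t) • ω₂) ᵥ* P
            = t • (ω₁ ᵥ* P) + (1-t) • (ω₂ ᵥ* P) := by
          ext j
          simp [Matrix.vecMul, dotProduct, Finset.mul_sum, Finset.sum_add_distrib, add_mul, mul_assoc]
        have hih := ih _ hm1 _ hm2 t ht0 ht1
        rw [← hmul] at hih
        have hg1 : m + β * V (ω₁ ᵥ* P) ≤ V ω₁ := by
          rw [hBell _ h1]; exact le_max_right _ _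
        have hg2 : m + β * V (ω₂ ᵥ* P) ≤ V ω₂ := by
          rw [hBell _ h2]; exact le_max_right _ _
        have e : β * (β ^ n * (2*C)) = β ^ (n+1) * (2*C) := by ring
        have h1' := mul_le_mul_of_nonneg_left hg1 ht0
        have h2' := mul_le_mul_of_nonneg_left hg2 (by linarith : (0:ℝ) ≤ 1 - t)
        have h3' := mul_le_mul_of_nonneg_left hih hβ₀.le
        nlinarith
  intro ω₁ h1 ω₂ h2 t ht0 ht1
  have hlim : Filter.Tendsto (fun n : ℕ => (β:ℝ) ^ n) Filter.atTop (nhds 0) :=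
    tendsto_pow_atTop_nhds_zero_of_lt_one hβ₀.le hβ₁
  have hlim2 := (hlim.mul_const (2*C)).const_add (t * V ω₁ + (1 - t) * V ω₂)
  rw [zero_mul, add_zero] at hlim2
  exact ge_of_tendsto' hlim2 (fun n => key n ω₁ h1 ω₂ h2 t ht0 ht1)
end

section
/- Let V be a bounded function on Δ satisfying the Bellman equation for subsidy m. Then V is Lipschitz continuous with respect to the ℓ¹-distance with constant B_max/(1−β): for all ω₁, ω₂ ∈ Δ, |V(ω₁) − V(ω₂)| ≤ (B_max/(1−β)) · Σ_i |ω₁,ᵢ − ω₂,ᵢ|, where B_max = max_i B_i. -/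
open Matrix


lemma zero_sum_dot_bound {K : ℕ} (hK : 0 < K) (c x : Fin K → ℝ)
    (hc : ∑ k, c k = 0) (A : ℝ) (hA : ∀ j k, x j - x k ≤ A) :
    |∑ k, c k * x k| ≤ (∑ k, |c k|) / 2 * A := by
  have hne : (Finset.univ : Finset (Fin K)).Nonempty := ⟨⟨0, hK⟩, Finset.mem_univ _⟩
  obtain ⟨jmax, -, hjmax⟩ := Finset.exists_max_image Finset.univ x hne
  obtain ⟨jmin, -, hjmin⟩ := Finset.exists_min_image Finset.univ x hne
  set cp : Fin K → ℝ := fun k => max (c k) 0 with hcp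
  set cn : Fin K → ℝ := fun k => max (-c k) 0 with hcn
  have hdecomp : ∀ k, c k = cp k - cn k := by
    intro k; simp only [hcp, hcn]
    rcases le_total (c k) 0 with h | h
    · rw [max_eq_right h, max_eq_left (by linarith)]; ring
    · rw [max_eq_left h, max_eq_right (by linarith)]; ring
  have habs : ∀ k, |c k| = cp k + cn k := by
    intro k; simp only [hcp, hcn]
    rcases le_total (c k) 0 with h | h
    · rw [max_eq_right h, max_eq_left (by linarith), abs_of_nonpos h]; ring
    · rw [max_eq_left h, max_eq_right (by linarith), abs_of_nonneg h]; ring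
  have hcp0 : ∀ k, 0 ≤ cp k := fun k => le_max_right _ _
  have hcn0 : ∀ k, 0 ≤ cn k := fun k => le_max_right _ _
  set s := ∑ k, cp k with hs
  set t := ∑ k, cn k with ht
  set D := ∑ k, |c k| with hD
  have hst : s - t = 0 := by
    rw [hs, ht, ← Finset.sum_sub_distrib, ← hc]
    exact Finset.sum_congr rfl fun k _ => (hdecomp k).symm
  have hstD : s + t = D := by
    rw [hs, ht, ← Finset.sum_add_distrib, hD]
    exact Finset.sum_congr rfl fun k _ => (habs k).symm
  have hs0 : 0 ≤ s := Finset.sum_nonneg fun k _ => hcp0 k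
  have hsD : s = D / 2 := by linarith
  have htD : t = D / 2 := by linarith
  have hsplit : ∑ k, c k * x k = ∑ k, cp k * x k - ∑ k, cn k * x k := by
    rw [← Finset.sum_sub_distrib]
    exact Finset.sum_congr rfl fun k _ => by rw [hdecomp k]; ring
  have hub : ∑ k, cp k * x k ≤ s * x jmax := by
    rw [hs, Finset.sum_mul]
    exact Finset.sum_le_sum fun k _ =>
      mul_le_mul_of_nonneg_left (hjmax k (Finset.mem_univ k)) (hcp0 k)
  have hub2 : ∑ k, cp k * x k ≥ s * x jmin := by
    rw [hs, Finset.sum_mul]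
    exact Finset.sum_le_sum fun k _ =>
      mul_le_mul_of_nonneg_left (hjmin k (Finset.mem_univ k)) (hcp0 k)
  have hlb : ∑ k, cn k * x k ≥ t * x jmin := by
    rw [ht, Finset.sum_mul]
    exact Finset.sum_le_sum fun k _ =>
      mul_le_mul_of_nonneg_left (hjmin k (Finset.mem_univ k)) (hcn0 k)
  have hlb2 : ∑ k, cn k * x k ≤ t * x jmax := by
    rw [ht, Finset.sum_mul]
    exact Finset.sum_le_sum fun k _ =>
      mul_le_mul_of_nonneg_left (hjmax k (Finset.mem_univ k)) (hcn0 k)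
  have hD0 : 0 ≤ D := by linarith
  have key := mul_le_mul_of_nonneg_left (hA jmax jmin) (by linarith : (0:ℝ) ≤ D / 2)
  rw [abs_le]
  constructor
  · rw [hsplit]; rw [hsD] at hub2; rw [htD] at hlb2; nlinarith
  · rw [hsplit]; rw [hsD] at hub; rw [htD] at hlb; nlinarith

/-- A bounded solution of the Bellman equation is Lipschitz continuous on the simplex
with constant `B_max/(1−β)` with respect to the ℓ¹-distance. -/
theorem bellman_value_lipschitz (K : ℕ) (hK : 1 ≤ K)
    (P : Matrix (Fin K) (Fin K) ℝ)
    (hPnn : ∀ i j, 0 ≤ P i j) (hProw : ∀ i, ∑ j, P i j = 1)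
    (B : Fin K → ℝ) (hB : ∀ i, 0 ≤ B i)
    (β : ℝ) (hβ₀ : 0 < β) (hβ₁ : β < 1) (m : ℝ)
    (V : (Fin K → ℝ) → ℝ)
    (hbd : ∃ C, ∀ ω ∈ stdSimplex ℝ (Fin K), |V ω| ≤ C)
    (hBell : ∀ ω ∈ stdSimplex ℝ (Fin K),
      V ω = max (ω ⬝ᵥ B + β * ∑ k, ω k * V (P k)) (m + β * V (ω ᵥ* P)))
    (Bmax : ℝ) (hBmax : IsGreatest (Set.range B) Bmax) :
    ∀ ω₁ ∈ stdSimplex ℝ (Fin K), ∀ ω₂ ∈ stdSimplex ℝ (Fin K),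
      |V ω₁ - V ω₂| ≤ Bmax / (1 - β) * ∑ i, |ω₁ i - ω₂ i| := by
  have hK0 : 0 < K := hK
  obtain ⟨C, hC⟩ := hbd
  set Δ := stdSimplex ℝ (Fin K) with hΔ
  -- basic facts
  have hmem : ∀ ω : Fin K → ℝ, (∀ i, 0 ≤ ω i) → (∑ i, ω i = 1) → ω ∈ Δ :=
    fun ω h1 h2 => ⟨h1, h2⟩
  have hmem' : ∀ ω ∈ Δ, (∀ i, 0 ≤ ω i) ∧ ∑ i, ω i = 1 := fun ω h => h
  obtain ⟨i₀, hi₀⟩ := hBmax.1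
  have hBmax0 : 0 ≤ Bmax := hi₀ ▸ hB i₀
  set L := Bmax / (1 - β) with hLdef
  have h1β : 0 < 1 - β := by linarith
  have hL0 : 0 ≤ L := div_nonneg hBmax0 h1β.le
  have hLB : L * (1 - β) = Bmax := by rw [hLdef, div_mul_cancel₀ _ h1β.ne']
  -- ℓ¹ distance between simplex points is ≤ 2
  have hd2 : ∀ x ∈ Δ, ∀ y ∈ Δ, ∑ i, |x i - y i| ≤ 2 := by
    intro x hx y hy
    calc ∑ i, |x i - y i| ≤ ∑ i, (x i + y i) := by
          refine Finset.sum_le_sum fun i _ => ?_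
          have := (abs_sub _ _ : |x i - y i| ≤ |x i| + |y i|)
          rwa [abs_of_nonneg (hx.1 i), abs_of_nonneg (hy.1 i)] at this
      _ = 2 := by rw [Finset.sum_add_distrib, hx.2, hy.2]; norm_num
  -- rows of P are in the simplex
  have hrow : ∀ k, P k ∈ Δ := fun k => ⟨hPnn k, hProw k⟩
  -- vecMul stays in simplex
  have hvec : ∀ ω ∈ Δ, ω ᵥ* P ∈ Δ := by
    intro ω hω
    refine ⟨fun j => ?_, ?_⟩
    · simp only [Matrix.vecMul, dotProduct]
      exact Finset.sum_nonneg fun i _ => mul_nonneg (hω.1 i) (hPnn i j)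
    · simp only [Matrix.vecMul, dotProduct]
      rw [Finset.sum_comm]
      calc ∑ i, ∑ j, ω i * P i j = ∑ i, ω i := by
            refine Finset.sum_congr rfl fun i _ => ?_
            rw [← Finset.mul_sum, hProw i, mul_one]
        _ = 1 := hω.2
  -- ℓ¹ contraction of vecMul
  have hdP : ∀ ω₁ ω₂ : Fin K → ℝ,
      ∑ j, |(ω₁ ᵥ* P) j - (ω₂ ᵥ* P) j| ≤ ∑ i, |ω₁ i - ω₂ i| := by
    intro ω₁ ω₂
    have h1 : ∀ j, |(ω₁ ᵥ* P) j - (ω₂ ᵥ* P) j| ≤ ∑ i, |ω₁ i - ω₂ i| * P i j := by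
      intro j
      simp only [Matrix.vecMul, dotProduct]
      rw [← Finset.sum_sub_distrib]
      refine le_trans (Finset.abs_sum_le_sum_abs _ _) (Finset.sum_le_sum fun i _ => ?_)
      rw [← sub_mul, abs_mul, abs_of_nonneg (hPnn i j)]
    calc ∑ j, |(ω₁ ᵥ* P) j - (ω₂ ᵥ* P) j| ≤ ∑ j, ∑ i, |ω₁ i - ω₂ i| * P i j :=
          Finset.sum_le_sum fun j _ => h1 j
      _ = ∑ i, |ω₁ i - ω₂ i| := by
          rw [Finset.sum_comm]
          refine Finset.sum_congr rfl fun i _ => ?_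
          rw [← Finset.mul_sum, hProw i, mul_one]
  -- the gap set
  set S : Set ℝ :=
    {x | ∃ ω₁ ∈ Δ, ∃ ω₂ ∈ Δ, x = |V ω₁ - V ω₂| - L * ∑ i, |ω₁ i - ω₂ i|} with hSdef
  have hω₀ : (fun i : Fin K => if i = ⟨0, hK0⟩ then (1:ℝ) else 0) ∈ Δ := by
    refine ⟨fun i => by positivity, ?_⟩
    rw [Finset.sum_ite_eq']
    simp
  have hSne : S.Nonempty := ⟨_, _, hω₀, _, hω₀, rfl⟩
  have hSbdd : BddAbove S := by
    refine ⟨C + C, fun x hx => ?_⟩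
    obtain ⟨ω₁, h₁, ω₂, h₂, rfl⟩ := hx
    have h3 : |V ω₁ - V ω₂| ≤ C + C := by
      calc |V ω₁ - V ω₂| ≤ |V ω₁| + |V ω₂| := abs_sub _ _
        _ ≤ C + C := add_le_add (hC ω₁ h₁) (hC ω₂ h₂)
    have h4 : 0 ≤ L * ∑ i, |ω₁ i - ω₂ i| :=
      mul_nonneg hL0 (Finset.sum_nonneg fun i _ => abs_nonneg _)
    linarith
  set M := sSup S with hMdef
  set M' := max M 0 with hM'def
  have hM'0 : 0 ≤ M' := le_max_right _ _
  have hMM' : M ≤ M' := le_max_left _ _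
  -- basic pairwise bound from the definition of the sup
  have hpair : ∀ x ∈ Δ, ∀ y ∈ Δ,
      |V x - V y| ≤ L * (∑ i, |x i - y i|) + M' := by
    intro x hx y hy
    have hmemS : |V x - V y| - L * ∑ i, |x i - y i| ∈ S := ⟨x, hx, y, hy, rfl⟩
    have := le_csSup hSbdd hmemS
    linarith [hMM']
  -- the key contraction estimate
  have key : ∀ ω₁ ∈ Δ, ∀ ω₂ ∈ Δ,
      |V ω₁ - V ω₂| ≤ L * (∑ i, |ω₁ i - ω₂ i|) + β * M' := by
    intro ω₁ h₁ ω₂ h₂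
    set d := ∑ i, |ω₁ i - ω₂ i| with hddef
    have hd0 : 0 ≤ d := Finset.sum_nonneg fun i _ => abs_nonneg _
    have hdle2 : d ≤ 2 := hd2 ω₁ h₁ ω₂ h₂
    rw [hBell ω₁ h₁, hBell ω₂ h₂]
    refine le_trans (abs_max_sub_max_le_max _ _ _ _) (max_le ?_ ?_)
    · -- exploration branch
      have hdot : |ω₁ ⬝ᵥ B - ω₂ ⬝ᵥ B| ≤ Bmax * d := by
        simp only [dotProduct]
        rw [← Finset.sum_sub_distrib]
        refine le_trans (Finset.abs_sum_le_sum_abs _ _) ?_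
        rw [hddef, Finset.mul_sum]
        refine Finset.sum_le_sum fun i _ => ?_
        rw [← sub_mul, abs_mul, abs_of_nonneg (hB i), mul_comm (Bmax)]
        exact mul_le_mul_of_nonneg_left (hBmax.2 (Set.mem_range_self i)) (abs_nonneg _)
      have hlin : |∑ k, ω₁ k * V (P k) - ∑ k, ω₂ k * V (P k)| ≤ d / 2 * (2 * L + M') := by
        rw [← Finset.sum_sub_distrib]
        simp_rw [← sub_mul]
        have hc : ∑ k, (ω₁ k - ω₂ k) = 0 := by
          rw [Finset.sum_sub_distrib, h₁.2, h₂.2]; ring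
        have hA : ∀ j k, V (P j) - V (P k) ≤ 2 * L + M' := by
          intro j k
          have h5 := hpair (P j) (hrow j) (P k) (hrow k)
          have h6 := hd2 (P j) (hrow j) (P k) (hrow k)
          have h7 : V (P j) - V (P k) ≤ |V (P j) - V (P k)| := le_abs_self _
          nlinarith
        have := zero_sum_dot_bound hK0 (fun k => ω₁ k - ω₂ k) (fun k => V (P k))
          hc (2 * L + M') hA
        simpa [hddef] using this
      calc |(ω₁ ⬝ᵥ B + β * ∑ k, ω₁ k * V (P k)) - (ω₂ ⬝ᵥ B + β * ∑ k, ω₂ k * V (P k))|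
          ≤ |ω₁ ⬝ᵥ B - ω₂ ⬝ᵥ B| + β * |∑ k, ω₁ k * V (P k) - ∑ k, ω₂ k * V (P k)| := by
            rw [show (ω₁ ⬝ᵥ B + β * ∑ k, ω₁ k * V (P k)) - (ω₂ ⬝ᵥ B + β * ∑ k, ω₂ k * V (P k))
              = (ω₁ ⬝ᵥ B - ω₂ ⬝ᵥ B) + β * (∑ k, ω₁ k * V (P k) - ∑ k, ω₂ k * V (P k)) from by ring]
            refine le_trans (abs_add_le _ _) ?_
            rw [abs_mul, abs_of_pos hβ₀]
        _ ≤ Bmax * d + β * (d / 2 * (2 * L + M')) :=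
            add_le_add hdot (mul_le_mul_of_nonneg_left hlin hβ₀.le)
        _ ≤ L * d + β * M' := by nlinarith [mul_nonneg (mul_nonneg hβ₀.le hM'0) (by linarith : (0:ℝ) ≤ 2 - d)]
    · -- subsidy branch
      have h8 := hpair (ω₁ ᵥ* P) (hvec ω₁ h₁) (ω₂ ᵥ* P) (hvec ω₂ h₂)
      have h9 := hdP ω₁ ω₂
      have h10 : |(m + β * V (ω₁ ᵥ* P)) - (m + β * V (ω₂ ᵥ* P))|
          = β * |V (ω₁ ᵥ* P) - V (ω₂ ᵥ* P)| := by
        rw [show (m + β * V (ω₁ ᵥ* P)) - (m + β * V (ω₂ ᵥ* P))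
            = β * (V (ω₁ ᵥ* P) - V (ω₂ ᵥ* P)) from by ring, abs_mul, abs_of_pos hβ₀]
      rw [h10]
      have h11 : |V (ω₁ ᵥ* P) - V (ω₂ ᵥ* P)| ≤ L * d + M' := by
        refine h8.trans ?_
        have : L * (∑ j, |(ω₁ ᵥ* P) j - (ω₂ ᵥ* P) j|) ≤ L * d :=
          mul_le_mul_of_nonneg_left (by simpa [hddef] using h9) hL0
        linarith
      nlinarith [mul_nonneg hL0 hd0]
  -- conclude M ≤ 0
  have hMβ : M ≤ β * M' := by
    refine csSup_le hSne fun x hx => ?_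
    obtain ⟨ω₁, h₁, ω₂, h₂, rfl⟩ := hx
    have := key ω₁ h₁ ω₂ h₂
    linarith
  have hM0 : M ≤ 0 := by
    rcases le_or_gt M 0 with h | h
    · exact h
    · rw [hM'def, max_eq_left h.le] at hMβ
      nlinarith
  -- final statement
  intro ω₁ h₁ ω₂ h₂
  have hmemS : |V ω₁ - V ω₂| - L * ∑ i, |ω₁ i - ω₂ i| ∈ S := ⟨ω₁, h₁, ω₂, h₂, rfl⟩
  have := le_csSup hSbdd hmemS
  have : |V ω₁ - V ω₂| - L * ∑ i, |ω₁ i - ω₂ i| ≤ 0 := by linarith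
  linarith
end

section
/- Let V be a bounded function on Δ satisfying the Bellman equation for subsidy m, and define the active set A(m) = {ω ∈ Δ : ω·B + β Σ_{k<K} ω_k V(p_k) > m + β V(ωP)}. Then A(m) is a convex subset of ℝ^K, and A(m) is open in the subspace topology of Δ. -/
open Matrix

/-- The active set `A(m)` is convex and open in the subspace topology of the simplex. -/
theorem active_set_convex_open (K : ℕ) (hK : 1 ≤ K)
    (P : Matrix (Fin K) (Fin K) ℝ)
    (hPnn : ∀ i j, 0 ≤ P i j) (hProw : ∀ i, ∑ j, P i j = 1)
    (B : Fin K → ℝ) (hB : ∀ i, 0 ≤ B i)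
    (β : ℝ) (hβ₀ : 0 < β) (hβ₁ : β < 1) (m : ℝ)
    (V : (Fin K → ℝ) → ℝ)
    (hbd : ∃ C, ∀ ω ∈ stdSimplex ℝ (Fin K), |V ω| ≤ C)
    (hBell : ∀ ω ∈ stdSimplex ℝ (Fin K),
      V ω = max (ω ⬝ᵥ B + β * ∑ k, ω k * V (P k)) (m + β * V (ω ᵥ* P)))
    (A : Set (Fin K → ℝ))
    (hA : A = {ω ∈ stdSimplex ℝ (Fin K) |
      m + β * V (ω ᵥ* P) < ω ⬝ᵥ B + β * ∑ k, ω k * V (P k)}) :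
    Convex ℝ A ∧ IsOpen (Subtype.val ⁻¹' A : Set (stdSimplex ℝ (Fin K))) := by
  obtain ⟨C0, hC0⟩ := hbd
  set C : ℝ := max C0 0 with hCdef
  have hCnn : (0:ℝ) ≤ C := le_max_right _ _
  have hCbd : ∀ ω ∈ stdSimplex ℝ (Fin K), |V ω| ≤ C :=
    fun ω h => (hC0 ω h).trans (le_max_left _ _)
  set c : Fin K → ℝ := fun k => B k + β * V (P k) with hcdef
  -- rewrite the linear part
  have hg : ∀ ω : Fin K → ℝ, ω ⬝ᵥ B + β * ∑ k, ω k * V (P k) = ∑ k, ω k * c k := by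
    intro ω
    rw [dotProduct, Finset.mul_sum, ← Finset.sum_add_distrib]
    exact Finset.sum_congr rfl fun k _ => by simp [hcdef]; ring
  have hBell' : ∀ ω ∈ stdSimplex ℝ (Fin K),
      V ω = max (∑ k, ω k * c k) (m + β * V (ω ᵥ* P)) := by
    intro ω hω; rw [hBell ω hω, hg]
  -- vecMul facts
  have hvm : ∀ (ω : Fin K → ℝ) (j), (ω ᵥ* P) j = ∑ k, ω k * P k j := by
    intro ω j; simp [Matrix.vecMul, dotProduct]
  have hΔP : ∀ ω ∈ stdSimplex ℝ (Fin K), ω ᵥ* P ∈ stdSimplex ℝ (Fin K) := by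
    intro ω hω
    obtain ⟨hnn, hsum⟩ := hω
    constructor
    · intro j; rw [hvm]
      exact Finset.sum_nonneg fun k _ => mul_nonneg (hnn k) (hPnn k j)
    · simp only [hvm]
      rw [Finset.sum_comm]
      simp only [← Finset.mul_sum, hProw, mul_one, hsum]
  have hvml : ∀ (a b : ℝ) (ω ω' : Fin K → ℝ),
      (a • ω + b • ω') ᵥ* P = a • (ω ᵥ* P) + b • (ω' ᵥ* P) := by
    intro a b ω ω'; funext j
    simp only [Pi.add_apply, Pi.smul_apply, smul_eq_mul, hvm]
    rw [Finset.mul_sum, Finset.mul_sum, ← Finset.sum_add_distrib]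
    exact Finset.sum_congr rfl fun k _ => by ring
  -- linear part linearity
  have hGlin : ∀ (a b : ℝ) (ω ω' : Fin K → ℝ),
      ∑ k, (a • ω + b • ω') k * c k = a * (∑ k, ω k * c k) + b * (∑ k, ω' k * c k) := by
    intro a b ω ω'
    rw [Finset.mul_sum, Finset.mul_sum, ← Finset.sum_add_distrib]
    exact Finset.sum_congr rfl fun k _ => by simp only [Pi.add_apply, Pi.smul_apply, smul_eq_mul]; ring
  have hG_le_V : ∀ ω ∈ stdSimplex ℝ (Fin K), ∑ k, ω k * c k ≤ V ω := by
    intro ω hω; rw [hBell' ω hω]; exact le_max_left _ _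
  have hm_le_V : ∀ ω ∈ stdSimplex ℝ (Fin K), m + β * V (ω ᵥ* P) ≤ V ω := by
    intro ω hω; rw [hBell' ω hω]; exact le_max_right _ _
  -- convexity estimate by induction
  have hconv : ∀ N : ℕ, ∀ ω ∈ stdSimplex ℝ (Fin K), ∀ ω' ∈ stdSimplex ℝ (Fin K),
      ∀ a b : ℝ, 0 ≤ a → 0 ≤ b → a + b = 1 →
      V (a • ω + b • ω') ≤ a * V ω + b * V ω' + β ^ N * (2 * C) := by
    intro N
    induction N with
    | zero =>
      intro ω hω ω' hω' a b ha hb hab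
      have hσ : a • ω + b • ω' ∈ stdSimplex ℝ (Fin K) :=
        (convex_stdSimplex ℝ (Fin K)) hω hω' ha hb hab
      have h1 : -C ≤ V ω := neg_le_of_abs_le (hCbd ω hω)
      have h2 : -C ≤ V ω' := neg_le_of_abs_le (hCbd ω' hω')
      have h3 : V (a • ω + b • ω') ≤ C := le_of_abs_le (hCbd _ hσ)
      have t1 : a * (-C) ≤ a * V ω := mul_le_mul_of_nonneg_left h1 ha
      have t2 : b * (-C) ≤ b * V ω' := mul_le_mul_of_nonneg_left h2 hb
      rw [pow_zero, one_mul]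
      nlinarith [t1, t2]
    | succ N ih =>
      intro ω hω ω' hω' a b ha hb hab
      have hσ : a • ω + b • ω' ∈ stdSimplex ℝ (Fin K) :=
        (convex_stdSimplex ℝ (Fin K)) hω hω' ha hb hab
      rw [hBell' _ hσ]
      apply max_le
      · rw [hGlin]
        have t1 : a * (∑ k, ω k * c k) ≤ a * V ω :=
          mul_le_mul_of_nonneg_left (hG_le_V ω hω) ha
        have t2 : b * (∑ k, ω' k * c k) ≤ b * V ω' :=
          mul_le_mul_of_nonneg_left (hG_le_V ω' hω') hb
        have hp : 0 ≤ β ^ (N + 1) * (2 * C) := by positivity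
        linarith
      · rw [hvml]
        have ihP := ih (ω ᵥ* P) (hΔP ω hω) (ω' ᵥ* P) (hΔP ω' hω') a b ha hb hab
        have e1 : β * V (a • (ω ᵥ* P) + b • (ω' ᵥ* P)) ≤
            β * (a * V (ω ᵥ* P) + b * V (ω' ᵥ* P) + β ^ N * (2 * C)) :=
          mul_le_mul_of_nonneg_left ihP hβ₀.le
        have t1 : a * (m + β * V (ω ᵥ* P)) ≤ a * V ω :=
          mul_le_mul_of_nonneg_left (hm_le_V ω hω) ha
        have t2 : b * (m + β * V (ω' ᵥ* P)) ≤ b * V ω' :=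
          mul_le_mul_of_nonneg_left (hm_le_V ω' hω') hb
        have e3 : m = a * m + b * m := by rw [← add_mul, hab, one_mul]
        rw [pow_succ]
        nlinarith [e1, t1, t2]
  have hpow : Filter.Tendsto (fun N : ℕ => β ^ N * (2 * C)) Filter.atTop (nhds 0) := by
    have := (tendsto_pow_atTop_nhds_zero_of_lt_one hβ₀.le hβ₁).mul_const (2 * C)
    simpa using this
  -- V is convex on the simplex
  have hVconv : ∀ ω ∈ stdSimplex ℝ (Fin K), ∀ ω' ∈ stdSimplex ℝ (Fin K),
      ∀ a b : ℝ, 0 ≤ a → 0 ≤ b → a + b = 1 →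
      V (a • ω + b • ω') ≤ a * V ω + b * V ω' := by
    intro ω hω ω' hω' a b ha hb hab
    have hl : Filter.Tendsto (fun N : ℕ => a * V ω + b * V ω' + β ^ N * (2 * C))
        Filter.atTop (nhds (a * V ω + b * V ω' + 0)) := tendsto_const_nhds.add hpow
    have := ge_of_tendsto' hl (fun N => hconv N ω hω ω' hω' a b ha hb hab)
    linarith
  constructor
  · -- Convexity of A
    intro x hx y hy a b ha hb hab
    rw [hA] at hx hy ⊢
    obtain ⟨hxΔ, hxlt⟩ := hx
    obtain ⟨hyΔ, hylt⟩ := hy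
    rw [hg] at hxlt hylt
    refine ⟨(convex_stdSimplex ℝ (Fin K)) hxΔ hyΔ ha hb hab, ?_⟩
    rw [hg, hGlin, hvml]
    have hVc := hVconv (x ᵥ* P) (hΔP x hxΔ) (y ᵥ* P) (hΔP y hyΔ) a b ha hb hab
    -- strict combination
    have t1 : a * (m + β * V (x ᵥ* P)) ≤ a * (∑ k, x k * c k) :=
      mul_le_mul_of_nonneg_left hxlt.le ha
    have t2 : b * (m + β * V (y ᵥ* P)) ≤ b * (∑ k, y k * c k) :=
      mul_le_mul_of_nonneg_left hylt.le hb
    -- get strictness: a > 0 or b > 0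
    rcases eq_or_lt_of_le ha with ha0 | ha'
    · have hb1 : b = 1 := by linarith
      have : a = 0 := ha0.symm
      subst this; subst hb1
      simp only [zero_mul, one_mul, zero_add]
      nlinarith [hVc]
    · have t1' : a * (m + β * V (x ᵥ* P)) < a * (∑ k, x k * c k) :=
        mul_lt_mul_of_pos_left hxlt ha'
      have e1 : β * V (a • (x ᵥ* P) + b • (y ᵥ* P)) ≤
          β * (a * V (x ᵥ* P) + b * V (y ᵥ* P)) :=
        mul_le_mul_of_nonneg_left hVc hβ₀.le
      have e3 : a * m + b * m = m := by rw [← add_mul, hab, one_mul]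
      nlinarith [e1, t1', t2, e3]
  · -- Openness
    -- Lipschitz estimate by induction
    set Mc : ℝ := ∑ k, |c k| with hMcdef
    have hMcnn : 0 ≤ Mc := Finset.sum_nonneg fun k _ => abs_nonneg _
    have hcabs : ∀ k, |c k| ≤ Mc :=
      fun k => Finset.single_le_sum (fun i _ => abs_nonneg (c i)) (Finset.mem_univ k)
    have hGlip : ∀ ω ω' : Fin K → ℝ,
        |(∑ k, ω k * c k) - ∑ k, ω' k * c k| ≤ Mc * ∑ k, |ω k - ω' k| := by
      intro ω ω'
      rw [← Finset.sum_sub_distrib]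
      calc |∑ k, (ω k * c k - ω' k * c k)| ≤ ∑ k, |ω k * c k - ω' k * c k| :=
            Finset.abs_sum_le_sum_abs _ _
        _ = ∑ k, |ω k - ω' k| * |c k| := by
            refine Finset.sum_congr rfl fun k _ => ?_
            rw [← abs_mul]; ring_nf
        _ ≤ ∑ k, |ω k - ω' k| * Mc :=
            Finset.sum_le_sum fun k _ => mul_le_mul_of_nonneg_left (hcabs k) (abs_nonneg _)
        _ = Mc * ∑ k, |ω k - ω' k| := by rw [← Finset.sum_mul]; ring
    have hcontr : ∀ ω ω' : Fin K → ℝ,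
        ∑ j, |(ω ᵥ* P) j - (ω' ᵥ* P) j| ≤ ∑ k, |ω k - ω' k| := by
      intro ω ω'
      have h1 : ∀ j, (ω ᵥ* P) j - (ω' ᵥ* P) j = ∑ k, (ω k - ω' k) * P k j := by
        intro j
        rw [hvm, hvm, ← Finset.sum_sub_distrib]
        exact Finset.sum_congr rfl fun k _ => by ring
      calc ∑ j, |(ω ᵥ* P) j - (ω' ᵥ* P) j|
          ≤ ∑ j, ∑ k, |ω k - ω' k| * P k j := by
            refine Finset.sum_le_sum fun j _ => ?_
            rw [h1]
            refine (Finset.abs_sum_le_sum_abs _ _).trans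
              (Finset.sum_le_sum fun k _ => ?_)
            rw [abs_mul, abs_of_nonneg (hPnn k j)]
        _ = ∑ k, |ω k - ω' k| := by
            rw [Finset.sum_comm]
            simp only [← Finset.mul_sum, hProw, mul_one]
    have hlip : ∀ N : ℕ, ∀ ω ∈ stdSimplex ℝ (Fin K), ∀ ω' ∈ stdSimplex ℝ (Fin K),
        |V ω - V ω'| ≤ Mc * (∑ k, |ω k - ω' k|) + β ^ N * (2 * C) := by
      intro N
      induction N with
      | zero =>
        intro ω hω ω' hω'
        have h1 := hCbd ω hω
        have h2 := hCbd ω' hω'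
        have h3 : |V ω - V ω'| ≤ |V ω| + |V ω'| := abs_sub _ _
        have hd : 0 ≤ ∑ k, |ω k - ω' k| := Finset.sum_nonneg fun k _ => abs_nonneg _
        have : 0 ≤ Mc * ∑ k, |ω k - ω' k| := mul_nonneg hMcnn hd
        rw [pow_zero, one_mul]
        linarith
      | succ N ih =>
        intro ω hω ω' hω'
        rw [hBell' ω hω, hBell' ω' hω']
        refine (abs_max_sub_max_le_max _ _ _ _).trans (max_le ?_ ?_)
        · have := hGlip ω ω'
          have hp : 0 ≤ β ^ (N + 1) * (2 * C) := by positivity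
          linarith
        · have heq : (m + β * V (ω ᵥ* P)) - (m + β * V (ω' ᵥ* P))
              = β * (V (ω ᵥ* P) - V (ω' ᵥ* P)) := by ring
          rw [heq, abs_mul, abs_of_pos hβ₀]
          have ihP := ih (ω ᵥ* P) (hΔP ω hω) (ω' ᵥ* P) (hΔP ω' hω')
          have e1 : β * |V (ω ᵥ* P) - V (ω' ᵥ* P)| ≤
              β * (Mc * (∑ j, |(ω ᵥ* P) j - (ω' ᵥ* P) j|) + β ^ N * (2 * C)) :=
            mul_le_mul_of_nonneg_left ihP hβ₀.le
          have f1 := hcontr ω ω'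
          have hdP : 0 ≤ ∑ j, |(ω ᵥ* P) j - (ω' ᵥ* P) j| :=
            Finset.sum_nonneg fun j _ => abs_nonneg _
          have g1 : β * (Mc * ∑ j, |(ω ᵥ* P) j - (ω' ᵥ* P) j|)
              ≤ Mc * ∑ k, |ω k - ω' k| := by
            nlinarith [mul_nonneg hMcnn hdP, mul_le_mul_of_nonneg_left f1 hMcnn]
          rw [pow_succ]
          nlinarith [e1, g1]
    -- V is Lipschitz on the simplex
    have hVlip : ∀ ω ∈ stdSimplex ℝ (Fin K), ∀ ω' ∈ stdSimplex ℝ (Fin K),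
        |V ω - V ω'| ≤ Mc * ∑ k, |ω k - ω' k| := by
      intro ω hω ω' hω'
      have hl : Filter.Tendsto (fun N : ℕ => Mc * (∑ k, |ω k - ω' k|) + β ^ N * (2 * C))
          Filter.atTop (nhds (Mc * (∑ k, |ω k - ω' k|) + 0)) := tendsto_const_nhds.add hpow
      have := ge_of_tendsto' hl (fun N => hlip N ω hω ω' hω')
      linarith
    -- continuity of V on the subtype
    have hVc : Continuous fun x : stdSimplex ℝ (Fin K) => V x.val := by
      refine (LipschitzWith.of_dist_le_mul
        (K := Real.toNNReal (Mc * K)) (fun x y => ?_)).continuous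
      rw [Real.dist_eq, Subtype.dist_eq]
      have h1 : |V x.val - V y.val| ≤ Mc * ∑ k, |x.val k - y.val k| :=
        hVlip x.val x.2 y.val y.2
      have h2 : ∑ k, |x.val k - y.val k| ≤ (K : ℝ) * dist x.val y.val := by
        calc ∑ k, |x.val k - y.val k| ≤ ∑ _k : Fin K, dist x.val y.val :=
              Finset.sum_le_sum fun k _ => by
                rw [← Real.dist_eq]; exact dist_le_pi_dist _ _ k
          _ = (K : ℝ) * dist x.val y.val := by
              rw [Finset.sum_const, Finset.card_univ, Fintype.card_fin]; simp [nsmul_eq_mul]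
      have h3 : Mc * (∑ k, |x.val k - y.val k|) ≤ Mc * ((K : ℝ) * dist x.val y.val) :=
        mul_le_mul_of_nonneg_left h2 hMcnn
      rw [Real.coe_toNNReal _ (by positivity : (0:ℝ) ≤ Mc * K)]
      nlinarith [h1, h3]
    -- assemble
    have hset : (Subtype.val ⁻¹' A : Set (stdSimplex ℝ (Fin K)))
        = {x : stdSimplex ℝ (Fin K) |
            m + β * V (x.val ᵥ* P) < x.val ⬝ᵥ B + β * ∑ k, x.val k * V (P k)} := by
      ext x
      simp [hA, x.2]
    rw [hset]
    apply isOpen_lt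
    · apply continuous_const.add
      apply continuous_const.mul
      have hmap : Continuous fun x : stdSimplex ℝ (Fin K) =>
          (⟨x.val ᵥ* P, hΔP x.val x.2⟩ : stdSimplex ℝ (Fin K)) := by
        refine Continuous.subtype_mk ?_ _
        refine continuous_pi fun j => ?_
        simp only [hvm]
        exact continuous_finset_sum _ fun k _ =>
          ((continuous_apply k).comp continuous_subtype_val).mul continuous_const
      exact hVc.comp hmap
    · apply Continuous.add
      · simp only [dotProduct]
        exact continuous_finset_sum _ fun k _ =>
          ((continuous_apply k).comp continuous_subtype_val).mul continuous_const
      · apply continuous_const.mul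
        exact continuous_finset_sum _ fun k _ =>
          ((continuous_apply k).comp continuous_subtype_val).mul continuous_const
end

section
/- Let P be a K×K real row-stochastic matrix with rows p₀,…,p_{K−1}, let B ∈ ℝ^K, let β ∈ (0,1), and let ω ∈ ℝ^K be a probability row vector. Suppose nonnegative integers L(ωP), L(p₀), …, L(p_{K−1}) are given, and define for each such point x: f(x) = (1 − β^{L(x)})/(1 − β) and g(x) = β^{L(x)} · (x P^{L(x)}) (a row vector in ℝ^K). Let F ∈ ℝ^K have entries F_k = f(p_k), let G be the K×K matrix whose k-th row is g(p_k), assume I_K − βG is invertible and set H = (I_K − βG)^{−1}. Assume the denominator D := 1 + β f(ωP) + β (β g(ωP) − ω) H F is nonzero, and define m := ( ω·B − β g(ωP)(I_K + β H G)B + β ω H G B ) / D. Then, setting 𝐕 := H (m F + G B) ∈ ℝ^K, the indifference identity ω·B + β ω·𝐕 = m + β ( f(ωP) m + g(ωP)·B + β g(ωP)·𝐕 ) holds; moreover m is the unique real number m' for which this identity holds with 𝐕 replaced by H (m' F + G B). -/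
open Matrix

/-- The closed-form approximate Whittle index: the subsidy `m` given by the
closed-form expression satisfies the indifference identity at `ω` for the
linearized threshold policy, and it is the unique real number doing so. -/
theorem approx_whittle_index_closed_form (K : ℕ)
    (P : Matrix (Fin K) (Fin K) ℝ)
    (hPnn : ∀ i j, 0 ≤ P i j) (hProw : ∀ i, ∑ j, P i j = 1)
    (B : Fin K → ℝ)
    (β : ℝ) (hβ₀ : 0 < β) (hβ₁ : β < 1)
    (ω : Fin K → ℝ) (hωnn : ∀ i, 0 ≤ ω i) (hωsum : ∑ i, ω i = 1)
    (LωP : ℕ) (L : Fin K → ℕ)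
    (fωP : ℝ) (hf : fωP = (1 - β ^ LωP) / (1 - β))
    (gωP : Fin K → ℝ) (hg : gωP = β ^ LωP • ((ω ᵥ* P) ᵥ* P ^ LωP))
    (F : Fin K → ℝ) (hF : ∀ k, F k = (1 - β ^ L k) / (1 - β))
    (G : Matrix (Fin K) (Fin K) ℝ) (hG : ∀ k, G k = β ^ L k • (P k ᵥ* P ^ L k))
    (hGdet : IsUnit (1 - β • G).det)
    (H : Matrix (Fin K) (Fin K) ℝ) (hH : H = (1 - β • G)⁻¹)
    (D : ℝ) (hD : D = 1 + β * fωP + β * (((β • gωP - ω) ᵥ* H) ⬝ᵥ F))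
    (hDne : D ≠ 0)
    (m : ℝ)
    (hm : m = (ω ⬝ᵥ B - β * ((gωP ᵥ* (1 + β • (H * G))) ⬝ᵥ B)
        + β * ((ω ᵥ* (H * G)) ⬝ᵥ B)) / D)
    (Vvec : Fin K → ℝ) (hVvec : Vvec = H *ᵥ (m • F + G *ᵥ B)) :
    (ω ⬝ᵥ B + β * (ω ⬝ᵥ Vvec)
        = m + β * (fωP * m + gωP ⬝ᵥ B + β * (gωP ⬝ᵥ Vvec))) ∧
    ∀ m' : ℝ,
      ω ⬝ᵥ B + β * (ω ⬝ᵥ (H *ᵥ (m' • F + G *ᵥ B)))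
          = m' + β * (fωP * m' + gωP ⬝ᵥ B
              + β * (gωP ⬝ᵥ (H *ᵥ (m' • F + G *ᵥ B)))) →
      m' = m := by

  have key : ∀ (v : Fin K → ℝ) (x : ℝ),
      v ⬝ᵥ (H *ᵥ (x • F + G *ᵥ B))
        = x * ((v ᵥ* H) ⬝ᵥ F) + (v ᵥ* (H * G)) ⬝ᵥ B := by
    intro v x
    rw [mulVec_add, mulVec_smul, dotProduct_add, dotProduct_smul,
      dotProduct_mulVec, mulVec_mulVec, dotProduct_mulVec, smul_eq_mul]
  set a : ℝ := (ω ᵥ* H) ⬝ᵥ F with ha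
  set b : ℝ := (ω ᵥ* (H * G)) ⬝ᵥ B with hb
  set c : ℝ := (gωP ᵥ* H) ⬝ᵥ F with hc
  set d : ℝ := (gωP ᵥ* (H * G)) ⬝ᵥ B with hd
  have hD' : D = 1 + β * fωP + β * (β * c - a) := by
    rw [hD, sub_vecMul, sub_dotProduct]
    congr 2
    rw [smul_vecMul, smul_dotProduct, smul_eq_mul]
  have hN : (gωP ᵥ* (1 + β • (H * G))) ⬝ᵥ B = gωP ⬝ᵥ B + β * d := by
    rw [vecMul_add, vecMul_one, add_dotProduct, ← dotProduct_mulVec,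
      smul_mulVec, dotProduct_smul, dotProduct_mulVec, smul_eq_mul]
  have hm' : m = (ω ⬝ᵥ B - β * (gωP ⬝ᵥ B + β * d) + β * b) / D := by
    rw [hm, hN]
  have hmD : m * D = ω ⬝ᵥ B - β * (gωP ⬝ᵥ B + β * d) + β * b := by
    rw [hm']; field_simp
  constructor
  · rw [hVvec, key ω m, key gωP m]
    rw [hD'] at hmD
    linarith [hmD]
  · intro m' hEq
    rw [key ω m', key gωP m'] at hEq
    have hm'D : m' * D = ω ⬝ᵥ B - β * (gωP ⬝ᵥ B + β * d) + β * b := by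
      rw [hD']; linarith [hEq]
    have : m' * D = m * D := by rw [hm'D, hmD]
    exact mul_right_cancel₀ hDne this
end

section
/- Let P be a 3×3 real row-stochastic matrix such that the complex matrix obtained from P has a non-real eigenvalue A·(cos θ + i sin θ) with A ∈ (0,1) and θ ∈ (0, 2π) (so sin θ ≠ 0), and such that 1 is an eigenvalue of P. Let ω ∈ ℝ³ be a probability row vector and B ∈ ℝ³, and let h(k) = (ω P^k)·B. Then there exist real numbers a' ≥ 0, b' ∈ [0, 2π) and c' such that for all k ∈ ℕ, h(k) = a' A^k sin(kθ + b') + c'. -/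
open Matrix

/-- If a 3×3 row-stochastic matrix has a non-real eigenvalue `A·(cos θ + i sin θ)`
with `A ∈ (0,1)`, `θ ∈ (0,2π)`, `sin θ ≠ 0`, and `1` is an eigenvalue, then the
k-step reward function has the form `h(k) = a' A^k sin(kθ + b') + c'`. -/
theorem kStepReward_complex_eigs (P : Matrix (Fin 3) (Fin 3) ℝ)
    (hPnn : ∀ i j, 0 ≤ P i j) (hProw : ∀ i, ∑ j, P i j = 1)
    (A θ : ℝ) (hA₀ : 0 < A) (hA₁ : A < 1)
    (hθ₀ : 0 < θ) (hθ₁ : θ < 2 * Real.pi) (hsin : Real.sin θ ≠ 0)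
    (heig : (Matrix.charpoly (P.map Complex.ofReal)).IsRoot
      ((A : ℂ) * ((Real.cos θ : ℂ) + (Real.sin θ : ℂ) * Complex.I)))
    (heig1 : (Matrix.charpoly (P.map Complex.ofReal)).IsRoot 1)
    (ω : Fin 3 → ℝ) (hωnn : ∀ i, 0 ≤ ω i) (hωsum : ∑ i, ω i = 1)
    (B : Fin 3 → ℝ)
    (h : ℕ → ℝ) (hh : ∀ k : ℕ, h k = (ω ᵥ* P ^ k) ⬝ᵥ B) :
    ∃ a' b' c' : ℝ, 0 ≤ a' ∧ 0 ≤ b' ∧ b' < 2 * Real.pi ∧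
      ∀ k : ℕ, h k = a' * A ^ k * Real.sin (k * θ + b') + c' := by
  set p := P.charpoly with hp
  have hmon : p.Monic := P.charpoly_monic
  have hdeg : p.natDegree = 3 := by
    rw [hp, Matrix.charpoly_natDegree_eq_dim]; simp
  have hc3 : p.coeff 3 = 1 := by
    have := hmon.coeff_natDegree; rwa [hdeg] at this
  -- Cayley–Hamilton and the resulting three-step linear recurrence for h
  have hCH : Polynomial.aeval P p = 0 := Matrix.aeval_self_charpoly P
  have hmat : P ^ 3 = -(p.coeff 2 • P ^ 2 + p.coeff 1 • P ^ 1 + p.coeff 0 • P ^ 0) := by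
    have hs := Polynomial.aeval_eq_sum_range (x := P) (p := p)
    rw [hCH, hdeg] at hs
    rw [Finset.sum_range_succ, Finset.sum_range_succ, Finset.sum_range_succ,
      Finset.sum_range_succ, Finset.sum_range_zero, hc3, one_smul] at hs
    have h0 : P ^ 3 + (p.coeff 2 • P ^ 2 + p.coeff 1 • P ^ 1 + p.coeff 0 • P ^ 0) = 0 := by
      linear_combination (norm := abel) hs.symm
    exact eq_neg_of_add_eq_zero_left h0
  have hsmul : ∀ (c : ℝ) (M : Matrix (Fin 3) (Fin 3) ℝ), ω ᵥ* (c • M) = c • (ω ᵥ* M) := by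
    intro c M; ext j
    simp [Matrix.vecMul, dotProduct, Finset.mul_sum, mul_left_comm]
  have hrec : ∀ k, h (k+3) = -(p.coeff 2 * h (k+2) + p.coeff 1 * h (k+1)
      + p.coeff 0 * h k) := by
    intro k
    have hPk : P ^ (k+3) = -(p.coeff 2 • P ^ (k+2) + p.coeff 1 • P ^ (k+1)
        + p.coeff 0 • P ^ (k+0)) := by
      rw [pow_add, hmat, mul_neg, mul_add, mul_add, mul_smul_comm, mul_smul_comm, mul_smul_comm,
        ← pow_add, ← pow_add, ← pow_add]
    rw [hh, hh, hh, hh, hPk]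
    rw [Matrix.vecMul_neg, Matrix.vecMul_add, Matrix.vecMul_add, hsmul, hsmul, hsmul,
      neg_dotProduct, add_dotProduct, add_dotProduct,
      smul_dotProduct, smul_dotProduct, smul_dotProduct]
    simp [smul_eq_mul]
  set c0 := p.coeff 0 with hc0; set c1 := p.coeff 1 with hc1; set c2 := p.coeff 2 with hc2
  -- The three eigenvalues 1, λ, conj λ are roots of the characteristic cubic
  set lam : ℂ := (A : ℂ) * ((Real.cos θ : ℂ) + (Real.sin θ : ℂ) * Complex.I) with hlam
  have hmap : (P.map Complex.ofReal).charpoly = p.map Complex.ofRealHom := by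
    have : P.map Complex.ofReal = P.map (Complex.ofRealHom : ℝ →+* ℂ) := rfl
    rw [hp, this, Matrix.charpoly_map]
  have hqdeg : (p.map Complex.ofRealHom).natDegree = 3 := by
    rw [Polynomial.Monic.natDegree_map hmon, hdeg]
  have heval : ∀ z : ℂ, (p.map Complex.ofRealHom).eval z
      = (c0 : ℂ) + c1 * z + c2 * z ^ 2 + z ^ 3 := by
    intro z
    rw [Polynomial.eval_eq_sum_range, hqdeg]
    rw [Finset.sum_range_succ, Finset.sum_range_succ, Finset.sum_range_succ,
      Finset.sum_range_succ, Finset.sum_range_zero]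
    simp [Polynomial.coeff_map, hc3, hc0, hc1, hc2]
  have eqlam : (c0 : ℂ) + c1 * lam + c2 * lam ^ 2 + lam ^ 3 = 0 := by
    have := heig; rw [Polynomial.IsRoot, hmap, heval] at this; exact this
  have eq1 : (c0 : ℂ) + c1 + c2 + 1 = 0 := by
    have := heig1; rw [Polynomial.IsRoot, hmap, heval] at this; simpa using this
  set mu : ℂ := starRingEnd ℂ lam with hmu
  have eqmu : (c0 : ℂ) + c1 * mu + c2 * mu ^ 2 + mu ^ 3 = 0 := by
    have := congrArg (starRingEnd ℂ) eqlam
    simpa [map_add, _root_.map_mul, map_pow, Complex.conj_ofReal] using this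
  -- The three roots are pairwise distinct
  have habs : ‖lam‖ = A := by
    rw [hlam]
    rw [norm_mul, Complex.norm_real, Real.norm_eq_abs, abs_of_pos hA₀]
    have : ‖((Real.cos θ : ℂ) + (Real.sin θ : ℂ) * Complex.I)‖ = 1 := by
      rw [Complex.ofReal_cos, Complex.ofReal_sin]
      exact Complex.norm_cos_add_sin_mul_I θ
    rw [this, mul_one]
  have hlam1 : lam ≠ 1 := by
    intro hcon
    rw [hcon] at habs; simp at habs; linarith
  have hmu1 : mu ≠ 1 := by
    intro hcon
    apply hlam1
    have := congrArg (starRingEnd ℂ) hcon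
    simpa [hmu] using this
  have hlamim : lam.im = A * Real.sin θ := by
    simp [hlam, Complex.mul_im, Complex.sin_ofReal_re, Complex.cos_ofReal_re]
  have hlammu : lam ≠ mu := by
    intro hcon
    have : lam.im = -lam.im := by
      conv_lhs => rw [hcon]
      simp [hmu]
    rw [hlamim] at this
    have : A * Real.sin θ = 0 := by linarith
    rcases mul_eq_zero.1 this with h | h
    · linarith
    · exact hsin h
  -- Solve the recurrence in ℂ via the explicit Vandermonde solution
  obtain ⟨c, hc⟩ : ∃ c : ℂ, c = ((h 0 : ℂ)*lam*mu - (h 1 : ℂ)*(lam+mu) + (h 2 : ℂ))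
      / ((1-lam)*(1-mu)) := ⟨_, rfl⟩
  obtain ⟨z, hz⟩ : ∃ z : ℂ, z = ((h 0 : ℂ)*mu - (h 1 : ℂ)*(1+mu) + (h 2 : ℂ))
      / ((lam-1)*(lam-mu)) := ⟨_, rfl⟩
  obtain ⟨w, hw⟩ : ∃ w : ℂ, w = ((h 0 : ℂ)*lam - (h 1 : ℂ)*(1+lam) + (h 2 : ℂ))
      / ((mu-1)*(mu-lam)) := ⟨_, rfl⟩
  have d1 : (1:ℂ) - lam ≠ 0 := sub_ne_zero.2 (Ne.symm hlam1)
  have d2 : (1:ℂ) - mu ≠ 0 := sub_ne_zero.2 (Ne.symm hmu1)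
  have d3 : lam - mu ≠ 0 := sub_ne_zero.2 hlammu
  have d1' : lam - (1:ℂ) ≠ 0 := sub_ne_zero.2 hlam1
  have d2' : mu - (1:ℂ) ≠ 0 := sub_ne_zero.2 hmu1
  have d3' : mu - lam ≠ 0 := sub_ne_zero.2 (Ne.symm hlammu)
  have base0 : ((h 0 : ℂ)) = c + z * lam ^ 0 + w * mu ^ 0 := by
    rw [hc, hz, hw]; field_simp; ring
  have base1 : ((h 1 : ℂ)) = c + z * lam ^ 1 + w * mu ^ 1 := by
    rw [hc, hz, hw]; field_simp; ring
  have base2 : ((h 2 : ℂ)) = c + z * lam ^ 2 + w * mu ^ 2 := by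
    rw [hc, hz, hw]; field_simp; ring
  have step : ∀ k : ℕ, ((h k : ℂ)) = c + z * lam ^ k + w * mu ^ k →
      ((h (k+1) : ℂ)) = c + z * lam ^ (k+1) + w * mu ^ (k+1) →
      ((h (k+2) : ℂ)) = c + z * lam ^ (k+2) + w * mu ^ (k+2) →
      ((h (k+3) : ℂ)) = c + z * lam ^ (k+3) + w * mu ^ (k+3) := by
    intro k q0 q1 q2
    have hr : ((h (k+3) : ℂ)) = -((c2:ℂ) * (h (k+2):ℂ) + (c1:ℂ) * (h (k+1):ℂ)
        + (c0:ℂ) * (h k:ℂ)) := by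
      have := congrArg (Complex.ofReal) (hrec k)
      push_cast at this ⊢
      exact this
    rw [hr, q0, q1, q2]
    linear_combination (-c) * eq1 + (-(z * lam ^ k)) * eqlam + (-(w * mu ^ k)) * eqmu
  have key : ∀ k : ℕ, ((h k : ℂ)) = c + z * lam ^ k + w * mu ^ k := by
    have : ∀ k : ℕ, ((h k : ℂ)) = c + z * lam ^ k + w * mu ^ k ∧
        ((h (k+1) : ℂ)) = c + z * lam ^ (k+1) + w * mu ^ (k+1) ∧
        ((h (k+2) : ℂ)) = c + z * lam ^ (k+2) + w * mu ^ (k+2) := by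
      intro k
      induction k with
      | zero => exact ⟨base0, base1, base2⟩
      | succ n ih => exact ⟨ih.2.1, ih.2.2, step n ih.1 ih.2.1 ih.2.2⟩
    exact fun k => (this k).1
  -- Take real parts
  obtain ⟨u, hu⟩ : ∃ u : ℂ, u = z + starRingEnd ℂ w := ⟨_, rfl⟩
  have hre : ∀ k : ℕ, h k = c.re + (u * lam ^ k).re := by
    intro k
    have h1 := congrArg Complex.re (key k)
    rw [Complex.ofReal_re] at h1
    have hconj : (w * mu ^ k).re = ((starRingEnd ℂ w) * lam ^ k).re := by
      have : w * mu ^ k = starRingEnd ℂ ((starRingEnd ℂ w) * lam ^ k) := by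
        rw [_root_.map_mul, map_pow, Complex.conj_conj, ← hmu]
      rw [this, Complex.conj_re]
    rw [h1, hu, add_mul, Complex.add_re, Complex.add_re, Complex.add_re, hconj]
    ring
  have hlampow : ∀ k : ℕ, lam ^ k
      = ((A^k : ℝ) : ℂ) * ((Real.cos (k*θ) : ℂ) + (Real.sin (k*θ):ℂ) * Complex.I) := by
    intro k
    rw [hlam, mul_pow, ← Complex.ofReal_pow]
    congr 1
    rw [Complex.ofReal_cos, Complex.ofReal_sin, Complex.ofReal_cos, Complex.ofReal_sin,
      ← Complex.exp_mul_I, ← Complex.exp_mul_I, ← Complex.exp_nat_mul]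
    push_cast
    ring_nf
  have hform : ∀ k : ℕ, h k = c.re + A^k * (u.re * Real.cos (k*θ)
      - u.im * Real.sin (k*θ)) := by
    have haux : ∀ (u : ℂ) (a x y : ℝ), (u * ((a:ℂ) * ((x:ℂ) + (y:ℂ) * Complex.I))).re
        = a * (u.re * x - u.im * y) := by
      intro u a x y
      simp [Complex.mul_re, Complex.mul_im, Complex.add_re, Complex.add_im]
      ring
    intro k
    rw [hre k, hlampow k, haux]
  -- Convert to amplitude-phase form
  obtain ⟨v, hv⟩ : ∃ v : ℂ, v = Complex.I * u := ⟨_, rfl⟩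
  have hvre : ‖v‖ * Real.cos (Complex.arg v) = -u.im := by
    rw [Complex.norm_mul_cos_arg, hv]; simp [Complex.mul_re]
  have hvim : ‖v‖ * Real.sin (Complex.arg v) = u.re := by
    rw [Complex.norm_mul_sin_arg, hv]; simp [Complex.mul_im]
  set bb := Complex.arg v with hbb
  have hπ := Real.pi_pos
  have hb1 : -Real.pi < bb := Complex.neg_pi_lt_arg v
  have hb2 : bb ≤ Real.pi := Complex.arg_le_pi v
  refine ⟨‖v‖, if bb < 0 then bb + 2*Real.pi else bb, c.re,
    norm_nonneg v, ?_, ?_, ?_⟩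
  · split <;> linarith
  · split <;> linarith
  · intro k
    have hcb : Real.cos (if bb < 0 then bb + 2*Real.pi else bb) = Real.cos bb := by
      split
      · exact Real.cos_add_two_pi bb
      · rfl
    have hsb : Real.sin (if bb < 0 then bb + 2*Real.pi else bb) = Real.sin bb := by
      split
      · exact Real.sin_add_two_pi bb
      · rfl
    rw [hform k, Real.sin_add, hcb, hsb]
    linear_combination (-(A^k * Real.sin ((k:ℝ)*θ))) * hvre
      + (-(A^k * Real.cos ((k:ℝ)*θ))) * hvim
end

section
/- Let P be a K×K real row-stochastic matrix that is regular, i.e., there exists n ∈ ℕ such that every entry of P^n is strictly positive. Then, over ℂ, the number 1 is a root of the characteristic polynomial of P of multiplicity exactly 1, and every complex root λ ≠ 1 of the characteristic polynomial of P satisfies |λ| < 1. -/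
open Matrix Polynomial Module

namespace PFAux

variable {K : ℕ}

def Stoch (S : Matrix (Fin K) (Fin K) ℝ) : Prop :=
  (∀ i j, 0 ≤ S i j) ∧ ∀ i, ∑ j, S i j = 1

lemma Stoch.mul {S T : Matrix (Fin K) (Fin K) ℝ} (hS : Stoch S) (hT : Stoch T) :
    Stoch (S * T) := by
  constructor
  · intro i j
    rw [Matrix.mul_apply]
    exact Finset.sum_nonneg fun k _ => mul_nonneg (hS.1 i k) (hT.1 k j)
  · intro i
    simp only [Matrix.mul_apply]
    rw [Finset.sum_comm]
    simp only [← Finset.mul_sum]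
    simp [hT.2, hS.2 i]

lemma Stoch.pow {S : Matrix (Fin K) (Fin K) ℝ} (hS : Stoch S) (N : ℕ) :
    Stoch (S ^ N) := by
  induction N with
  | zero =>
    constructor
    · intro i j
      by_cases h : i = j <;> simp [h, Matrix.one_apply]
    · intro i; simp [Matrix.one_apply, Finset.sum_ite_eq]
  | succ n ih => rw [pow_succ]; exact ih.mul hS

lemma map_pow' (S : Matrix (Fin K) (Fin K) ℝ) (N : ℕ) :
    (S ^ N).map Complex.ofReal = (S.map Complex.ofReal) ^ N := by
  have h : ∀ T : Matrix (Fin K) (Fin K) ℝ,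
      T.map Complex.ofReal = Complex.ofRealHom.mapMatrix T := fun _ => rfl
  rw [h, h, ← _root_.map_pow]

lemma mulVec_apply' (S : Matrix (Fin K) (Fin K) ℝ) (u : Fin K → ℂ) (i : Fin K) :
    (S.map Complex.ofReal).mulVec u i = ∑ j, (S i j : ℂ) * u j := by
  simp [Matrix.mulVec, dotProduct, Matrix.map_apply]

lemma abs_mulVec_le {S : Matrix (Fin K) (Fin K) ℝ} (hS : Stoch S) {u : Fin K → ℂ}
    {M : ℝ} (hM : ∀ j, ‖u j‖ ≤ M) (i : Fin K) :
    ‖(S.map Complex.ofReal).mulVec u i‖ ≤ M := by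
  rw [mulVec_apply']
  calc ‖∑ j, (S i j : ℂ) * u j‖ ≤ ∑ j, ‖(S i j : ℂ) * u j‖ :=
        norm_sum_le _ _
    _ = ∑ j, S i j * ‖u j‖ := by
        simp [norm_mul, Complex.norm_real, abs_of_nonneg (hS.1 i _)]
    _ ≤ ∑ j, S i j * M := Finset.sum_le_sum fun j _ =>
        mul_le_mul_of_nonneg_left (hM j) (hS.1 i j)
    _ = M := by rw [← Finset.sum_mul, hS.2 i, one_mul]

lemma eq_ofReal_abs_of_re_eq_abs {w : ℂ} (h : w.re = ‖w‖) :
    w = (‖w‖ : ℂ) := by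
  have h2 : ‖w‖ ^ 2 = w.re ^ 2 + w.im ^ 2 := by
    rw [Complex.sq_norm, Complex.normSq_apply]; ring
  have him : w.im = 0 := by
    have h3 : w.im ^ 2 = 0 := by rw [← h] at h2; linarith
    exact pow_eq_zero_iff (n := 2) (by norm_num) |>.mp h3
  apply Complex.ext <;> simp [h, him]

/-- Key constancy lemma: an eigenvector of a positive stochastic matrix for an
eigenvalue of modulus one is constant. -/
lemma eigvec_const (hK : 1 ≤ K) {R : Matrix (Fin K) (Fin K) ℝ}
    (hpos : ∀ i j, 0 < R i j) (hrow : ∀ i, ∑ j, R i j = 1)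
    {v : Fin K → ℂ} (hv : v ≠ 0) {μ : ℂ} (hμ : ‖μ‖ = 1)
    (heq : (R.map Complex.ofReal).mulVec v = μ • v) :
    ∃ c : ℂ, c ≠ 0 ∧ v = fun _ => c := by
  have hnn : ∀ i j, 0 ≤ R i j := fun i j => (hpos i j).le
  obtain ⟨i₀, -, hmax⟩ := Finset.exists_max_image Finset.univ (fun j => ‖v j‖)
    ⟨⟨0, hK⟩, Finset.mem_univ _⟩
  set M : ℝ := ‖v i₀‖ with hM
  have hmax' : ∀ j, ‖v j‖ ≤ M := fun j => hmax j (Finset.mem_univ j)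
  have hMpos : 0 < M := by
    rcases eq_or_lt_of_le (norm_nonneg (v i₀)) with h | h
    · exfalso; apply hv; funext j
      have h2 : ‖v j‖ ≤ 0 := by rw [h]; exact hmax' j
      simpa using norm_eq_zero.mp (le_antisymm h2 (norm_nonneg _))
    · exact h
  set Sv : ℂ := ∑ j, (R i₀ j : ℂ) * v j with hSv
  have hrow_i : Sv = μ * v i₀ := by
    rw [hSv, ← mulVec_apply', heq]; simp
  have habsS : ‖Sv‖ = M := by rw [hrow_i, norm_mul, hμ, one_mul]
  have hle1 : ‖Sv‖ ≤ ∑ j, R i₀ j * ‖v j‖ := by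
    refine (norm_sum_le _ _).trans_eq ?_
    simp [norm_mul, Complex.norm_real, abs_of_nonneg (hnn i₀ _)]
  have hle2 : ∑ j, R i₀ j * ‖v j‖ ≤ M := by
    calc ∑ j, R i₀ j * ‖v j‖ ≤ ∑ j, R i₀ j * M :=
          Finset.sum_le_sum fun j _ => mul_le_mul_of_nonneg_left (hmax' j) (hnn i₀ j)
      _ = M := by rw [← Finset.sum_mul, hrow i₀, one_mul]
  have hsum_eq : ∑ j, R i₀ j * ‖v j‖ = M :=
    le_antisymm hle2 (by rw [← habsS]; exact hle1)
  have habs_eq : ∀ j, ‖v j‖ = M := by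
    have hzero : ∑ j, R i₀ j * (M - ‖v j‖) = 0 := by
      simp only [mul_sub]
      rw [Finset.sum_sub_distrib, hsum_eq, ← Finset.sum_mul, hrow i₀, one_mul, sub_self]
    intro j
    have := (Finset.sum_eq_zero_iff_of_nonneg (fun j _ =>
      mul_nonneg (hnn i₀ j) (sub_nonneg.mpr (hmax' j)))).mp hzero j (Finset.mem_univ j)
    have h2 : M - ‖v j‖ = 0 := by
      rcases mul_eq_zero.mp this with h | h
      · exact absurd h (ne_of_gt (hpos i₀ j))
      · exact h
    linarith
  have hterm : ∀ j, ((starRingEnd ℂ) Sv * ((R i₀ j : ℂ) * v j)).re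
      = ‖(starRingEnd ℂ) Sv * ((R i₀ j : ℂ) * v j)‖ := by
    have hle : ∀ j ∈ Finset.univ, ((starRingEnd ℂ) Sv * ((R i₀ j : ℂ) * v j)).re
        ≤ ‖(starRingEnd ℂ) Sv * ((R i₀ j : ℂ) * v j)‖ :=
      fun j _ => Complex.re_le_norm _
    have hsums : ∑ j, ((starRingEnd ℂ) Sv * ((R i₀ j : ℂ) * v j)).re
        = ∑ j, ‖(starRingEnd ℂ) Sv * ((R i₀ j : ℂ) * v j)‖ := by
      have l1 : ∑ j, ((starRingEnd ℂ) Sv * ((R i₀ j : ℂ) * v j)).re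
          = ((starRingEnd ℂ) Sv * Sv).re := by
        rw [hSv, Finset.mul_sum, Complex.re_sum]
      have l2 : ((starRingEnd ℂ) Sv * Sv).re = M ^ 2 := by
        rw [mul_comm, Complex.mul_conj]
        simp [Complex.normSq_eq_norm_sq, habsS, ← Complex.ofReal_pow]
      have r1 : ∀ j, ‖(starRingEnd ℂ) Sv * ((R i₀ j : ℂ) * v j)‖
          = M * (R i₀ j * ‖v j‖) := by
        intro j
        simp [norm_mul, Complex.norm_conj, habsS, Complex.norm_real,
          abs_of_nonneg (hnn i₀ _)]
      rw [l1, l2]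
      simp only [r1]
      rw [← Finset.mul_sum, hsum_eq]; ring
    intro j
    exact (Finset.sum_eq_sum_iff_of_le hle).mp hsums j (Finset.mem_univ j)
  refine ⟨Sv, by rw [← norm_ne_zero_iff, habsS]; exact hMpos.ne', ?_⟩
  funext j
  have h1 : (starRingEnd ℂ) Sv * ((R i₀ j : ℂ) * v j)
      = ((M * (R i₀ j * M) : ℝ) : ℂ) := by
    have := eq_ofReal_abs_of_re_eq_abs (hterm j)
    rw [this]
    simp [norm_mul, Complex.norm_conj, habsS, Complex.norm_real,
      abs_of_nonneg (hnn i₀ _), habs_eq j]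
  have h2 : Sv * ((starRingEnd ℂ) Sv * ((R i₀ j : ℂ) * v j))
      = ((M ^ 2 : ℝ) : ℂ) * ((R i₀ j : ℂ) * v j) := by
    rw [← mul_assoc, Complex.mul_conj]
    simp [Complex.normSq_eq_norm_sq, habsS, ← Complex.ofReal_pow]
  rw [h1, hrow_i] at h2
  have hRj : ((R i₀ j : ℂ)) ≠ 0 := by
    exact_mod_cast (hpos i₀ j).ne'
  have hM2 : ((M ^ 2 : ℝ) : ℂ) ≠ 0 := by
    exact_mod_cast (pow_pos hMpos 2).ne'
  have h3 : ((M ^ 2 : ℝ) : ℂ) * ((R i₀ j : ℂ) * v j)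
      = ((M ^ 2 : ℝ) : ℂ) * ((R i₀ j : ℂ) * (μ * v i₀)) := by
    rw [← h2]; push_cast; ring
  have h4 := mul_left_cancel₀ hRj (mul_left_cancel₀ hM2 h3)
  rw [h4, ← hrow_i]

section CP
variable {n : Type*} [Fintype n] [DecidableEq n]

lemma eval_charpoly (A : Matrix n n ℂ) (μ : ℂ) :
    A.charpoly.eval μ = (μ • (1 : Matrix n n ℂ) - A).det := by
  rw [Matrix.charpoly, ← Polynomial.coe_evalRingHom, RingHom.map_det]
  congr 1
  ext i j
  by_cases h : i = j
  · subst h; simp [Matrix.charmatrix_apply_eq, Matrix.one_apply]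
  · simp [Matrix.charmatrix_apply_ne _ _ _ h, Matrix.one_apply, h]

lemma exists_eigvec (A : Matrix n n ℂ) {μ : ℂ} (h : A.charpoly.IsRoot μ) :
    ∃ v : n → ℂ, v ≠ 0 ∧ A.mulVec v = μ • v := by
  have hdet : (μ • (1 : Matrix n n ℂ) - A).det = 0 := by
    rw [← eval_charpoly]; exact h
  obtain ⟨v, hv0, hv⟩ := (Matrix.exists_mulVec_eq_zero_iff).mpr hdet
  refine ⟨v, hv0, ?_⟩
  rw [Matrix.sub_mulVec, Matrix.smul_mulVec, Matrix.one_mulVec, sub_eq_zero] at hv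
  exact hv.symm

lemma charpoly_sub_smul_one (A : Matrix n n ℂ) (c : ℂ) :
    (A - c • (1 : Matrix n n ℂ)).charpoly = A.charpoly.comp (X + C c) := by
  have hmap : charmatrix (A - c • (1 : Matrix n n ℂ))
      = (charmatrix A).map (aeval (X + C c) : ℂ[X] →ₐ[ℂ] ℂ[X]) := by
    ext i j
    by_cases h : i = j
    · subst h
      simp [Matrix.charmatrix_apply_eq, Matrix.one_apply, map_sub, aeval_X, aeval_C]
      ring
    · simp [Matrix.charmatrix_apply_ne _ _ _ h, Matrix.one_apply, h, aeval_C]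
  rw [Matrix.charpoly, hmap]
  have hdet2 : ((charmatrix A).map (aeval (X + C c) : ℂ[X] →ₐ[ℂ] ℂ[X])).det
      = (aeval (X + C c) : ℂ[X] →ₐ[ℂ] ℂ[X]).toRingHom (charmatrix A).det := by
    rw [RingHom.map_det, RingHom.mapMatrix_apply]; rfl
  rw [hdet2]
  show aeval (X + C c) A.charpoly = _
  rw [aeval_def, eval₂_eq_eval_map]
  simp only [Polynomial.comp, Polynomial.eval₂_eq_eval_map, Matrix.charpoly,
    Polynomial.algebraMap_eq]

lemma rootMultiplicity_comp_shift (p : ℂ[X]) (hp : p ≠ 0) (a : ℂ) :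
    (p.comp (X + C a)).rootMultiplicity 0 = p.rootMultiplicity a := by
  set m := p.rootMultiplicity a with hm
  set g := p /ₘ (X - C a) ^ m with hg
  have hfac : (X - C a) ^ m * g = p := p.pow_mul_divByMonic_rootMultiplicity_eq a
  have hg1 : g.eval a ≠ 0 := eval_divByMonic_pow_rootMultiplicity_ne_zero a hp
  have hcomp : p.comp (X + C a) = X ^ m * g.comp (X + C a) := by
    rw [← hfac]
    simp [mul_comp, pow_comp, sub_comp, X_comp, C_comp]
  have hgc0 : (g.comp (X + C a)).eval 0 = g.eval a := by
    simp [eval_comp]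
  have hne : p.comp (X + C a) ≠ 0 := by
    intro h0
    apply hp
    have h1 : (p.comp (X + C a)).comp (X - C a) = p := by
      rw [comp_assoc]
      simp
    rw [h0] at h1
    simpa using h1.symm
  rw [hcomp]
  rw [hcomp] at hne
  rw [Polynomial.rootMultiplicity_mul hne]
  have h1 : (X ^ m : ℂ[X]).rootMultiplicity 0 = m := by
    have hx : (X ^ m : ℂ[X]) = (X - C 0) ^ m := by simp
    rw [hx, Polynomial.rootMultiplicity_X_sub_C_pow]
  have h2 : (g.comp (X + C a)).rootMultiplicity 0 = 0 := by
    apply Polynomial.rootMultiplicity_eq_zero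
    simp [IsRoot, hgc0, hg1]
  rw [h1, h2, add_zero]

end CP

lemma charpoly_toLin' {k : ℕ} (A : Matrix (Fin k) (Fin k) ℂ) :
    (Matrix.toLin' A).charpoly = A.charpoly := by
  rw [← LinearMap.charpoly_toMatrix (Matrix.toLin' A) (Pi.basisFun ℂ (Fin k)),
    LinearMap.toMatrix_eq_toMatrix', LinearMap.toMatrix'_toLin']

lemma maxGenEigenspace_zero_eq_ker {V : Type*} [AddCommGroup V] [Module ℂ V]
    [FiniteDimensional ℂ V] (φ : Module.End ℂ V)
    (h : LinearMap.ker (φ ^ 2) ≤ LinearMap.ker φ) :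
    φ.maxGenEigenspace 0 = LinearMap.ker φ := by
  have hV : φ.maxGenEigenspace 0 = ⨆ (n : ℕ), LinearMap.ker (φ ^ n) := by
    simp [← Module.End.iSup_genEigenspace_eq, Module.End.genEigenspace_nat]
  have hstab : LinearMap.ker (φ ^ 1) = LinearMap.ker (φ ^ 2) := by
    refine le_antisymm ?_ (by simpa [pow_one] using h)
    intro x hx
    simp only [LinearMap.mem_ker, pow_one] at hx
    simp only [LinearMap.mem_ker, pow_two, Module.End.mul_apply, hx, map_zero]
  rw [hV]
  apply le_antisymm
  · apply iSup_le
    intro n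
    match n with
    | 0 => simp [pow_zero, Module.End.one_eq_id]
    | (m+1) =>
      have := Module.End.ker_pow_constant (f := φ) (k := 1) (by simpa using hstab) m
      rw [add_comm 1 m] at this
      rw [← this, pow_one]
  · have := le_iSup (fun n : ℕ => LinearMap.ker (φ ^ n)) 1
    simpa [pow_one] using this

lemma rootMultiplicity_one_eq {k : ℕ} (A : Matrix (Fin k) (Fin k) ℂ)
    (h : LinearMap.ker ((Matrix.toLin' A - 1) ^ 2) ≤ LinearMap.ker (Matrix.toLin' A - 1)) :
    A.charpoly.rootMultiplicity 1
      = Module.finrank ℂ (LinearMap.ker (Matrix.toLin' A - 1)) := by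
  have hne : A.charpoly ≠ 0 := A.charpoly_monic.ne_zero
  set φ : Module.End ℂ (Fin k → ℂ) := Matrix.toLin' A - 1 with hφ
  have hφeq : φ = Matrix.toLin' (A - 1) := by
    rw [hφ, map_sub]
    congr 1
    ext x i
    simp [Matrix.toLin'_apply]
  have h1 : A.charpoly.rootMultiplicity 1 = (A - 1).charpoly.rootMultiplicity 0 := by
    have hs := charpoly_sub_smul_one A (1 : ℂ)
    rw [one_smul] at hs
    rw [hs, rootMultiplicity_comp_shift _ hne]
  rw [h1]
  rw [Polynomial.rootMultiplicity_eq_natTrailingDegree']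
  have h3 : (A - 1).charpoly = φ.charpoly := by rw [hφeq, charpoly_toLin']
  rw [h3, ← LinearMap.finrank_maxGenEigenspace_zero_eq φ, maxGenEigenspace_zero_eq_ker φ h]

end PFAux

open PFAux

open Matrix

/-- Perron–Frobenius for regular row-stochastic matrices: over `ℂ`, the value `1`
is a root of the characteristic polynomial of multiplicity exactly `1`, and every
other complex root `λ ≠ 1` satisfies `|λ| < 1`. -/
theorem perron_frobenius_regular (K : ℕ) (hK : 1 ≤ K)
    (P : Matrix (Fin K) (Fin K) ℝ)
    (hPnn : ∀ i j, 0 ≤ P i j) (hProw : ∀ i, ∑ j, P i j = 1)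
    (hreg : ∃ n : ℕ, ∀ i j, 0 < (P ^ n) i j) :
    (Matrix.charpoly (P.map Complex.ofReal)).rootMultiplicity 1 = 1 ∧
    ∀ lam : ℂ, (Matrix.charpoly (P.map Complex.ofReal)).IsRoot lam → lam ≠ 1 →
      ‖lam‖ < 1 := by
  have hPst : Stoch P := ⟨hPnn, hProw⟩
  obtain ⟨n, hn⟩ := hreg
  set R : Matrix (Fin K) (Fin K) ℝ := P ^ (n + 1) with hR
  have hRpos : ∀ i j, 0 < R i j := by
    intro i j
    rw [hR, pow_succ', Matrix.mul_apply]
    have hex : ∃ k, 0 < P i k := by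
      by_contra hc
      push_neg at hc
      have : ∑ j, P i j = 0 := Finset.sum_eq_zero fun k _ => le_antisymm (hc k) (hPnn i k)
      rw [hProw i] at this; norm_num at this
    obtain ⟨k, hk⟩ := hex
    apply Finset.sum_pos' (fun l _ => mul_nonneg (hPnn i l) ((hPst.pow n).1 l j))
    exact ⟨k, Finset.mem_univ k, mul_pos hk (hn k j)⟩
  have hRst : Stoch R := hPst.pow (n + 1)
  set Q : Matrix (Fin K) (Fin K) ℂ := P.map Complex.ofReal with hQ
  have hQpow : ∀ N, (P ^ N).map Complex.ofReal = Q ^ N := fun N => map_pow' P N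
  have i₁ : Fin K := ⟨0, hK⟩
  -- Q fixes the constant vector
  have hone : Q.mulVec (fun _ => (1 : ℂ)) = fun _ => (1 : ℂ) := by
    funext i
    rw [hQ, mulVec_apply']
    simp only [mul_one]
    rw [← Complex.ofReal_sum]
    rw [hProw i, Complex.ofReal_one]
  -- iterated action
  have hQiter : ∀ (v : Fin K → ℂ) (μ : ℂ), Q.mulVec v = μ • v →
      ∀ N : ℕ, (Q ^ N).mulVec v = μ ^ N • v := by
    intro v μ hv N
    induction N with
    | zero => simp
    | succ m ih =>
      rw [pow_succ', ← Matrix.mulVec_mulVec, ih, Matrix.mulVec_smul, hv, pow_succ']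
      rw [smul_smul, mul_comm]
  -- any eigenvalue of modulus 1 forces constant eigenvector; and eigenvalue is 1
  have heig_one : ∀ (v : Fin K → ℂ) (μ : ℂ), v ≠ 0 → ‖μ‖ = 1 →
      Q.mulVec v = μ • v → μ = 1 := by
    intro v μ hv0 hμ hv
    have hRv : (R.map Complex.ofReal).mulVec v = (μ ^ (n+1)) • v := by
      rw [hR, hQpow (n+1)]
      exact hQiter v μ hv (n+1)
    have hμ' : ‖μ ^ (n+1)‖ = 1 := by
      rw [norm_pow, hμ, one_pow]
    obtain ⟨c, hc0, hcv⟩ := eigvec_const hK hRpos hRst.2 hv0 hμ' hRv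
    -- v is the constant vector c, hence Q.mulVec v = v
    have hQv : Q.mulVec v = v := by
      rw [hcv]
      funext i
      rw [hQ, mulVec_apply']
      rw [← Finset.sum_mul]
      rw [show ∑ j, (P i j : ℂ) = 1 by rw [← Complex.ofReal_sum, hProw i, Complex.ofReal_one]]
      rw [one_mul]
    rw [hQv] at hv
    have := congrFun hv i₁
    rw [hcv] at this
    simp only [Pi.smul_apply, smul_eq_mul] at this
    -- this : c = μ * c
    have h6 : (μ - 1) * c = 0 := by rw [sub_mul, one_mul]; exact sub_eq_zero.mpr this.symm
    rcases mul_eq_zero.mp h6 with h | h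
    · exact sub_eq_zero.mp h
    · exact absurd h hc0
  -- eigenvalues have modulus at most 1
  have heig_le : ∀ (v : Fin K → ℂ) (μ : ℂ), v ≠ 0 →
      Q.mulVec v = μ • v → ‖μ‖ ≤ 1 := by
    intro v μ hv0 hv
    obtain ⟨i₀, -, hmax⟩ := Finset.exists_max_image Finset.univ (fun j => ‖v j‖)
      ⟨i₁, Finset.mem_univ _⟩
    set M : ℝ := ‖v i₀‖ with hM
    have hmax' : ∀ j, ‖v j‖ ≤ M := fun j => hmax j (Finset.mem_univ j)
    have hMpos : 0 < M := by
      rcases eq_or_lt_of_le (norm_nonneg (v i₀)) with h | h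
      · exfalso; apply hv0; funext j
        have h2 : ‖v j‖ ≤ 0 := by rw [h]; exact hmax' j
        simpa using norm_eq_zero.mp (le_antisymm h2 (norm_nonneg _))
      · exact h
    have hb : ‖Q.mulVec v i₀‖ ≤ M := by
      rw [hQ]; exact abs_mulVec_le hPst hmax' i₀
    rw [hv] at hb
    simp only [Pi.smul_apply, smul_eq_mul, norm_mul] at hb
    rw [← hM] at hb
    calc ‖μ‖ = ‖μ‖ * M / M := by field_simp
      _ ≤ M / M := by gcongr
      _ = 1 := by field_simp
  -- the kernel condition: no generalized eigenvectors at 1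
  have hker2 : LinearMap.ker ((Matrix.toLin' Q - 1) ^ 2) ≤ LinearMap.ker (Matrix.toLin' Q - 1) := by
    intro w hw
    set φ : Module.End ℂ (Fin K → ℂ) := Matrix.toLin' Q - 1 with hφ
    have hφx : ∀ x, φ x = Q.mulVec x - x := by
      intro x
      simp [hφ, Matrix.toLin'_apply]
    set v : Fin K → ℂ := φ w with hvdef
    have hv_ker : φ v = 0 := by
      have := hw
      simp only [LinearMap.mem_ker, pow_two, Module.End.mul_apply] at this
      exact this
    have hQv : Q.mulVec v = v := by
      have := hφx v
      rw [hv_ker] at this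
      exact (sub_eq_zero.mp this.symm)
    rw [LinearMap.mem_ker]
    by_contra hv0
    have hv0' : v ≠ 0 := hv0
    -- v is constant nonzero
    have hRv : (R.map Complex.ofReal).mulVec v = ((1:ℂ) ^ (n+1)) • v := by
      rw [hR, hQpow (n+1)]
      exact hQiter v 1 (by rw [hQv, one_smul]) (n+1)
    obtain ⟨c, hc0, hcv⟩ := eigvec_const hK hRpos hRst.2 hv0' (by simp) hRv
    -- Q w = w + v
    have hQw : Q.mulVec w = w + v := by
      have h := hφx w
      rw [← hvdef] at h
      have h2 := sub_eq_iff_eq_add.mp h.symm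
      rw [h2]; abel
    -- iterate
    have hiter : ∀ N : ℕ, (Q ^ N).mulVec w = w + (N : ℂ) • v := by
      intro N
      induction N with
      | zero => simp
      | succ m ih =>
        rw [pow_succ', ← Matrix.mulVec_mulVec, ih, Matrix.mulVec_add, Matrix.mulVec_smul,
          hQw, hQv]
        push_cast
        module
    -- bound
    obtain ⟨i₂, -, hmaxw⟩ := Finset.exists_max_image Finset.univ (fun j => ‖w j‖)
      ⟨i₁, Finset.mem_univ _⟩
    set M' : ℝ := ‖w i₂‖ with hM'
    have hmaxw' : ∀ j, ‖w j‖ ≤ M' := fun j => hmaxw j (Finset.mem_univ j)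
    have hbound : ∀ N : ℕ, ‖w i₁ + (N : ℂ) * c‖ ≤ M' := by
      intro N
      have h1 : (Q ^ N).mulVec w i₁ = w i₁ + (N : ℂ) * c := by
        rw [hiter N]
        simp [hcv]
      rw [← h1, ← hQpow N]
      exact abs_mulVec_le (hPst.pow N) hmaxw' i₁
    have hcabs : 0 < ‖c‖ := norm_pos_iff.mpr hc0
    obtain ⟨N, hN⟩ := exists_nat_gt ((M' + ‖w i₁‖) / ‖c‖)
    have hN2 : M' + ‖w i₁‖ < (N : ℝ) * ‖c‖ := by
      rw [div_lt_iff₀ hcabs] at hN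
      linarith
    have h3 : ‖(N : ℂ) * c‖ ≤ ‖w i₁ + (N : ℂ) * c‖
        + ‖w i₁‖ := by
      have h4 := norm_add_le (w i₁ + (N : ℂ) * c) (-(w i₁))
      simpa using h4
    have h5 : ‖(N : ℂ) * c‖ = (N : ℝ) * ‖c‖ := by
      rw [norm_mul, Complex.norm_natCast]
    have h6 := hbound N
    rw [h5] at h3
    linarith
  -- kernel of (toLin' Q - 1) is the span of the constant vector
  have hker_eq : LinearMap.ker (Matrix.toLin' Q - 1)
      = Submodule.span ℂ {(fun _ => (1 : ℂ) : Fin K → ℂ)} := by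
    apply le_antisymm
    · intro x hx
      rw [LinearMap.mem_ker] at hx
      have hQx : Q.mulVec x = x := by
        have h := hx
        simp only [LinearMap.sub_apply, Module.End.one_apply, Matrix.toLin'_apply] at h
        exact sub_eq_zero.mp h
      by_cases hx0 : x = 0
      · rw [hx0]; exact Submodule.zero_mem _
      · have hRx : (R.map Complex.ofReal).mulVec x = ((1 : ℂ) ^ (n + 1)) • x := by
          rw [hR, hQpow (n + 1)]
          exact hQiter x 1 (by rw [hQx, one_smul]) (n + 1)
        obtain ⟨c, hc0, hcx⟩ := eigvec_const hK hRpos hRst.2 hx0 (by simp) hRx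
        rw [hcx]
        refine Submodule.mem_span_singleton.mpr ⟨c, ?_⟩
        funext j
        simp
    · rw [Submodule.span_le, Set.singleton_subset_iff]
      rw [SetLike.mem_coe, LinearMap.mem_ker]
      simp only [LinearMap.sub_apply, Module.End.one_apply, Matrix.toLin'_apply]
      rw [hone]
      simp
  have hfr : Module.finrank ℂ (LinearMap.ker (Matrix.toLin' Q - 1)) = 1 := by
    rw [hker_eq]
    apply finrank_span_singleton
    intro h
    have := congrFun h i₁
    simp at this
  constructor
  · rw [rootMultiplicity_one_eq Q hker2, hfr]
  · intro lam hroot hne1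
    obtain ⟨v, hv0, hv⟩ := exists_eigvec Q hroot
    have hle := heig_le v lam hv0 hv
    rcases lt_or_eq_of_le hle with h | h
    · exact h
    · exact absurd (heig_one v lam hv0 h hv) hne1
end

section
/- Let a < 0, 0 < b < 1, c ∈ ℝ, and define h(k) = a b^k + c for k ∈ ℕ. Let r* ∈ ℝ satisfy a + c ≤ r* < c. Then the set {k ∈ ℕ : h(k) > r*} is nonempty and its least element equals ⌊log_b((c − r*)/(−a))⌋ + 1, where log_b denotes the logarithm in base b. Moreover, if r* ≥ c then h(k) ≤ r* for all k ∈ ℕ. -/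
/-- For `h(k) = a b^k + c` with `a < 0`, `0 < b < 1`: if `a + c ≤ r* < c` then the set
`{k : h(k) > r*}` is nonempty with least element `⌊log_b((c − r*)/(−a))⌋ + 1`;
and if `r* ≥ c` then `h(k) ≤ r*` for all `k`. -/
theorem first_crossing_geometric (a b c : ℝ) (ha : a < 0) (hb₀ : 0 < b) (hb₁ : b < 1)
    (h : ℕ → ℝ) (hh : ∀ k : ℕ, h k = a * b ^ k + c) (r : ℝ) :
    (a + c ≤ r → r < c →
      {k : ℕ | h k > r}.Nonempty ∧
      ((sInf {k : ℕ | h k > r} : ℕ) : ℤ)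
        = ⌊Real.log ((c - r) / (-a)) / Real.log b⌋ + 1) ∧
    (c ≤ r → ∀ k : ℕ, h k ≤ r) := by
  have hna : (0:ℝ) < -a := by linarith
  have hlb : Real.log b < 0 := Real.log_neg hb₀ hb₁
  constructor
  · intro h1 h2
    have ht_pos : 0 < (c - r) / (-a) := div_pos (by linarith) hna
    have key : ∀ k : ℕ, h k > r ↔
        ⌊Real.log ((c - r) / (-a)) / Real.log b⌋ < (k : ℤ) := by
      intro k
      rw [hh, Int.floor_lt]
      push_cast
      rw [div_lt_iff_of_neg hlb, ← Real.log_pow,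
        Real.log_lt_log_iff (pow_pos hb₀ k) ht_pos, lt_div_iff₀ hna]
      constructor <;> intro hx <;> nlinarith
    have ht1 : (c - r) / (-a) ≤ 1 := (div_le_one hna).2 (by linarith)
    have hL0 : 0 ≤ ⌊Real.log ((c - r) / (-a)) / Real.log b⌋ :=
      Int.floor_nonneg.2 (div_nonneg_of_nonpos
        (Real.log_nonpos ht_pos.le ht1) hlb.le)
    set L := ⌊Real.log ((c - r) / (-a)) / Real.log b⌋ with hLdef
    set N := (L + 1).toNat with hNdef
    have hNcast : (N : ℤ) = L + 1 := Int.toNat_of_nonneg (by linarith)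
    have hNmem : N ∈ {k : ℕ | h k > r} := by
      rw [Set.mem_setOf_eq, key N, hNcast]; omega
    have hlow : ∀ m ∈ {k : ℕ | h k > r}, N ≤ m := by
      intro m hm
      rw [Set.mem_setOf_eq, key m] at hm
      omega
    have hinf : sInf {k : ℕ | h k > r} = N := IsLeast.csInf_eq ⟨hNmem, hlow⟩
    exact ⟨⟨N, hNmem⟩, by rw [hinf, hNcast]⟩
  · intro hcr k
    rw [hh]
    have := mul_neg_of_neg_of_pos ha (pow_pos hb₀ k)
    linarith
end
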